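/- arXiv:1912.11421 — 6 statements merged into one kernel-verified Lean document; each statement's English description precedes it below -/
import Mathlib

section
/- Let r ≥ 2 and let H be an r-partite r-uniform hypergraph. If H has more than ((t-1)/r)·|∂H| edges, where ∂H denotes the shadow of H, then H contains (as a subhypergraph) every tight r-tree T having t edges. -/
/-- `TightSeq r es` says that the list of `r`-sets `es` (with the *last* added
edge at the head) is a valid construction sequence of a tight `r`-tree:
the last list entry is an arbitrary `r`-set, and every edge `e` added later
contains exactly one vertex `v` not belonging to the previously constructed
hypergraph, with `e \ {v}` contained in some previous edge. -/
def TightSeq {α : Type} [DecidableEq α] (r : ℕ) : List (Finset α) → Prop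
  | [] => False
  | [e] => e.card = r
  | e :: f :: rest =>
      e.card = r ∧
      (∃ v ∈ e, v ∉ List.foldr (· ∪ ·) (∅ : Finset α) (f :: rest) ∧
        ∃ g ∈ f :: rest, e \ {v} ⊆ g) ∧
      TightSeq r (f :: rest)

/-- A tight `r`-tree is an `r`-uniform hypergraph (given by its edge set)
that can be built by a tight construction sequence. -/
def IsTightTree {α : Type} [DecidableEq α] (r : ℕ) (T : Finset (Finset α)) : Prop :=
  ∃ es : List (Finset α), TightSeq r es ∧ es.toFinset = T

/-- A hypergraph `H` contains a hypergraph `T` if there is a map from the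
vertices of `T` to the vertices of `H`, injective on the vertex set of `T`,
sending every edge of `T` to an edge of `H`. -/
def HContains {α β : Type} [DecidableEq α] [DecidableEq β]
    (H : Finset (Finset α)) (T : Finset (Finset β)) : Prop :=
  ∃ f : β → α, Set.InjOn f ↑(T.sup id) ∧ ∀ e ∈ T, e.image f ∈ H

/-- The shadow of an `r`-uniform hypergraph `H`: the family of all
`(r-1)`-element vertex sets contained in some edge of `H`. -/
def shadowSets {α : Type} [DecidableEq α] (r : ℕ) (H : Finset (Finset α)) :
    Finset (Finset α) :=
  H.sup fun e => e.powersetCard (r - 1)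

namespace KTmp
variable {α : Type} [DecidableEq α]

def unionList (es : List (Finset α)) : Finset α := List.foldr (· ∪ ·) (∅ : Finset α) es

lemma mem_unionList {es : List (Finset α)} {v : α} :
    v ∈ unionList es ↔ ∃ e ∈ es, v ∈ e := by
  induction es with
  | nil => simp [unionList]
  | cons e l ih =>
    simp only [unionList, List.foldr, Finset.mem_union, List.mem_cons] at ih ⊢
    constructor
    · rintro (h | h)
      · exact ⟨e, Or.inl rfl, h⟩
      · obtain ⟨g, hg, hv⟩ := ih.1 h
        exact ⟨g, Or.inr hg, hv⟩
    · rintro ⟨g, (rfl | hg), hv⟩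
      · exact Or.inl hv
      · exact Or.inr (ih.2 ⟨g, hg, hv⟩)

lemma subset_unionList {es : List (Finset α)} {e : Finset α} (he : e ∈ es) :
    e ⊆ unionList es := fun v hv => mem_unionList.2 ⟨e, he, hv⟩

lemma tightSeq_card {r : ℕ} : ∀ {es : List (Finset α)}, TightSeq r es →
    ∀ e ∈ es, e.card = r := by
  intro es
  induction es with
  | nil => intro h; exact h.elim
  | cons e l ih =>
    intro h f hf
    cases l with
    | nil => simp at hf; subst hf; exact h
    | cons g rest =>
      rcases List.mem_cons.1 hf with hf | hf
      subst hf
      · exact h.1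
      · exact ih h.2.2 f hf

lemma tightSeq_union_insert {r : ℕ} {e f : Finset α} {rest : List (Finset α)}
    (h : TightSeq r (e :: f :: rest)) :
    ∃ v ∈ e, v ∉ unionList (f :: rest) ∧
      (∃ g ∈ f :: rest, e \ {v} ⊆ g) ∧
      unionList (e :: f :: rest) = insert v (unionList (f :: rest)) := by
  obtain ⟨-, ⟨v, hv, hvU, g, hg, hsub⟩, -⟩ := h
  refine ⟨v, hv, hvU, ⟨g, hg, hsub⟩, ?_⟩
  have h1 : unionList (e :: f :: rest) = e ∪ unionList (f :: rest) := rfl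
  rw [h1]
  apply Finset.Subset.antisymm
  · intro x hx
    rcases Finset.mem_union.1 hx with hx | hx
    · by_cases hxv : x = v
      · simp [hxv]
      · exact Finset.mem_insert_of_mem ((subset_unionList hg) (hsub (by simp [hxv, hx])))
    · exact Finset.mem_insert_of_mem hx
  · intro x hx
    rcases Finset.mem_insert.1 hx with hx | hx
    · exact Finset.mem_union_left _ (hx ▸ hv)
    · exact Finset.mem_union_right _ hx

lemma tightSeq_union_card {r : ℕ} (hr : 1 ≤ r) : ∀ {es : List (Finset α)}, TightSeq r es →
    (unionList es).card + 1 = es.length + r := by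
  intro es
  induction es with
  | nil => intro h; exact h.elim
  | cons e l ih =>
    intro h
    cases l with
    | nil =>
      have : unionList [e] = e := by simp [unionList]
      rw [this, h, Nat.add_comm]; rfl
    | cons f rest =>
      obtain ⟨v, hv, hvU, -, hins⟩ := tightSeq_union_insert h
      have := ih h.2.2
      rw [hins, Finset.card_insert_of_notMem hvU]
      simp only [List.length_cons] at this ⊢
      omega

lemma tightSeq_nodup {r : ℕ} : ∀ {es : List (Finset α)}, TightSeq r es → es.Nodup := by
  intro es
  induction es with
  | nil => intro h; exact h.elim
  | cons e l ih =>
    intro h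
    cases l with
    | nil => simp
    | cons f rest =>
      obtain ⟨v, hv, hvU, -, -⟩ := tightSeq_union_insert h
      refine List.nodup_cons.2 ⟨?_, ih h.2.2⟩
      intro he
      exact hvU ((subset_unionList he) hv)


lemma colouring_base {r : ℕ} (hr : 1 ≤ r) {e : Finset α} (he : e.card = r) :
    ∃ c : α → Fin r, ∀ i, (e.filter fun v => c v = i).card = 1 := by
  classical
  refine ⟨fun v => if h : v ∈ e then Fin.cast he (e.equivFin ⟨v, h⟩) else ⟨0, hr⟩, ?_⟩
  intro i
  rw [Finset.card_eq_one]
  refine ⟨(e.equivFin.symm (Fin.cast he.symm i)).1, ?_⟩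
  ext x
  simp only [Finset.mem_filter, Finset.mem_singleton]
  constructor
  · rintro ⟨hx, hcx⟩
    rw [dif_pos hx] at hcx
    have : e.equivFin ⟨x, hx⟩ = Fin.cast he.symm i := by
      apply Fin.ext
      have := congrArg Fin.val hcx
      simpa using this
    have := congrArg e.equivFin.symm this
    rw [Equiv.symm_apply_apply] at this
    exact congrArg Subtype.val this
  · rintro rfl
    have hx : (e.equivFin.symm (Fin.cast he.symm i)).1 ∈ e :=
      (e.equivFin.symm (Fin.cast he.symm i)).2
    refine ⟨hx, ?_⟩
    rw [dif_pos hx]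
    have : (⟨(e.equivFin.symm (Fin.cast he.symm i)).1, hx⟩ : {x // x ∈ e}) =
        e.equivFin.symm (Fin.cast he.symm i) := rfl
    rw [this, Equiv.apply_symm_apply]
    apply Fin.ext; simp

lemma tightSeq_colouring {r : ℕ} (hr : 1 ≤ r) : ∀ {es : List (Finset α)}, TightSeq r es →
    ∃ c : α → Fin r, ∀ e ∈ es, ∀ i, (e.filter fun v => c v = i).card = 1 := by
  intro es
  induction es with
  | nil => intro h; exact h.elim
  | cons e l ih =>
    intro h
    cases l with
    | nil =>
      obtain ⟨c, hc⟩ := colouring_base hr h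
      exact ⟨c, by simpa using hc⟩
    | cons f rest =>
      obtain ⟨c, hc⟩ := ih h.2.2
      obtain ⟨v, hv, hvU, ⟨g, hg, hsub⟩, -⟩ := tightSeq_union_insert h
      -- facts about g
      have hgcard : g.card = r := tightSeq_card h.2.2 g hg
      have hecard : e.card = r := h.1
      have hscard : (e \ {v}).card = r - 1 := by
        rw [Finset.card_sdiff_of_subset (by simpa using hv)]
        simp [hecard]
      have hsg : (g \ (e \ {v})).card = 1 := by
        rw [Finset.card_sdiff_of_subset hsub, hgcard, hscard]; omega
      obtain ⟨w, hw⟩ := Finset.card_eq_one.1 hsg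
      have hwg : w ∈ g ∧ w ∉ e \ {v} := by
        have : w ∈ g \ (e \ {v}) := hw ▸ Finset.mem_singleton_self w
        exact ⟨(Finset.mem_sdiff.1 this).1, (Finset.mem_sdiff.1 this).2⟩
      have hgins : g = insert w (e \ {v}) := by
        apply (Finset.eq_of_subset_of_card_le ?_ ?_).symm
        · intro x hx
          rcases Finset.mem_insert.1 hx with rfl | hx
          · exact hwg.1
          · exact hsub hx
        · rw [Finset.card_insert_of_notMem hwg.2, hscard, hgcard]; omega
      -- counts on e \ {v} under c
      have hcs : ∀ i, ((e \ {v}).filter fun x => c x = i).card =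
          if c w = i then 0 else 1 := by
        intro i
        have hgf := hc g hg i
        rw [hgins, Finset.filter_insert] at hgf
        by_cases hcw : c w = i
        · rw [if_pos hcw, Finset.card_insert_of_notMem
            (fun hmem => hwg.2 (Finset.mem_filter.1 hmem).1)] at hgf
          rw [if_pos hcw]; omega
        · rw [if_neg hcw] at hgf
          rw [if_neg hcw]; exact hgf
      -- new colouring
      refine ⟨Function.update c v (c w), ?_⟩
      have hold : ∀ e' ∈ f :: rest, ∀ i,
          (e'.filter fun x => Function.update c v (c w) x = i).card = 1 := by
        intro e' he' i
        have hveq : ∀ x ∈ e', Function.update c v (c w) x = c x := by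
          intro x hx
          have : x ≠ v := fun hxv => hvU (hxv ▸ subset_unionList he' hx)
          exact Function.update_of_ne this _ _
        rw [Finset.filter_congr (fun x hx => by rw [hveq x hx])]
        exact hc e' he' i
      intro e' he' i
      rcases List.mem_cons.1 he' with rfl | he'
      · -- the new edge
        have heins : e' = insert v (e' \ {v}) := by
          ext x
          simp only [Finset.mem_insert, Finset.mem_sdiff, Finset.mem_singleton]
          constructor
          · intro hx; by_cases hxv : x = v
            · exact Or.inl hxv
            · exact Or.inr ⟨hx, hxv⟩
          · rintro (rfl | ⟨hx, -⟩)
            · exact hv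
            · exact hx
        rw [heins, Finset.filter_insert]
        have hrest : ((e' \ {v}).filter fun x => Function.update c v (c w) x = i) =
            ((e' \ {v}).filter fun x => c x = i) := by
          apply Finset.filter_congr
          intro x hx
          have : x ≠ v := fun h' => (Finset.mem_sdiff.1 hx).2 (by simp [h'])
          rw [Function.update_of_ne this]
        rw [Function.update_self]
        by_cases hcw : c w = i
        · rw [if_pos hcw, hrest]
          rw [Finset.card_insert_of_notMem
            (fun hmem => (Finset.mem_sdiff.1 (Finset.mem_filter.1 hmem).1).2 (by simp))]
          rw [hcs i, if_pos hcw]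
        · rw [if_neg hcw, hrest, hcs i, if_neg hcw]
      · exact hold e' he' i


def degH (H : Finset (Finset α)) (s : Finset α) : ℕ := (H.filter fun e => s ⊆ e).card

def dshadow (r : ℕ) (P : α → Fin r) (i : Fin r) (H : Finset (Finset α)) :
    Finset (Finset α) :=
  (shadowSets r H).filter fun s => s.filter (fun v => P v = i) = ∅

lemma mem_shadowSets {r : ℕ} {H : Finset (Finset α)} {s : Finset α} :
    s ∈ shadowSets r H ↔ ∃ e ∈ H, s ⊆ e ∧ s.card = r - 1 := by
  simp [shadowSets, Finset.mem_sup, Finset.mem_powersetCard]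

lemma shadowSets_mono {r : ℕ} {H H' : Finset (Finset α)} (h : H' ⊆ H) :
    shadowSets r H' ⊆ shadowSets r H := Finset.le_iff_subset.mp (Finset.sup_mono h)

lemma dshadow_mono {r : ℕ} {P : α → Fin r} {i : Fin r} {H H' : Finset (Finset α)}
    (h : H' ⊆ H) : dshadow r P i H' ⊆ dshadow r P i H :=
  Finset.filter_subset_filter _ (shadowSets_mono h)

lemma degH_pos {r : ℕ} {P : α → Fin r} {i : Fin r} {H : Finset (Finset α)} {s : Finset α}
    (hs : s ∈ dshadow r P i H) : 1 ≤ degH H s := by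
  obtain ⟨e, he, hsub, -⟩ := mem_shadowSets.1 (Finset.mem_filter.1 hs).1
  rw [degH, Nat.one_le_iff_ne_zero, ← Nat.pos_iff_ne_zero, Finset.card_pos]
  exact ⟨e, Finset.mem_filter.2 ⟨he, hsub⟩⟩

lemma exactly_one_missing {r : ℕ} (hr : 1 ≤ r) (P : α → Fin r) {s e : Finset α}
    (hse : s ⊆ e) (hs : s.card = r - 1)
    (hpe : ∀ i, (e.filter fun v => P v = i).card = 1) :
    (Finset.univ.filter fun i : Fin r => s.filter (fun v => P v = i) = ∅).card = 1 := by
  classical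
  set c : Fin r → ℕ := fun i => (s.filter fun v => P v = i).card with hc
  have hle : ∀ i, c i ≤ 1 := fun i =>
    (hpe i) ▸ Finset.card_le_card (Finset.filter_subset_filter _ hse)
  have hsum : ∑ i, c i = r - 1 := by
    rw [← hs]
    exact (Finset.card_eq_sum_card_fiberwise (fun x _ => Finset.mem_univ (P x))).symm
  have heq : (Finset.univ.filter fun i : Fin r => s.filter (fun v => P v = i) = ∅) =
      (Finset.univ.filter fun i : Fin r => c i = 0) := by
    apply Finset.filter_congr
    intro i _
    simp [hc, Finset.card_eq_zero]
  rw [heq]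
  have hsplit := Finset.card_filter_add_card_filter_not
    (s := (Finset.univ : Finset (Fin r))) (p := fun i => c i = 0)
  have hsum2 : ∑ i ∈ Finset.univ.filter (fun i : Fin r => ¬ c i = 0), c i =
      (Finset.univ.filter fun i : Fin r => ¬ c i = 0).card := by
    rw [Finset.card_eq_sum_ones]
    apply Finset.sum_congr rfl
    intro i hi
    have := (Finset.mem_filter.1 hi).2
    have := hle i
    omega
  have hsum3 : ∑ i, c i = ∑ i ∈ Finset.univ.filter (fun i : Fin r => c i = 0), c i +
      ∑ i ∈ Finset.univ.filter (fun i : Fin r => ¬ c i = 0), c i :=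
    (Finset.sum_filter_add_sum_filter_not _ _ _).symm
  have hzero : ∑ i ∈ Finset.univ.filter (fun i : Fin r => c i = 0), c i = 0 := by
    apply Finset.sum_eq_zero
    intro i hi
    exact (Finset.mem_filter.1 hi).2
  have hcard : (Finset.univ : Finset (Fin r)).card = r := by simp
  omega

lemma shadow_card_partition {r : ℕ} (hr : 1 ≤ r) (P : α → Fin r) {H : Finset (Finset α)}
    (hpart : ∀ e ∈ H, ∀ i, (e.filter fun v => P v = i).card = 1) :
    (shadowSets r H).card = ∑ i : Fin r, (dshadow r P i H).card := by
  classical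
  have h1 : ∀ i : Fin r, (dshadow r P i H).card =
      ∑ s ∈ shadowSets r H, if s.filter (fun v => P v = i) = ∅ then 1 else 0 := by
    intro i
    rw [dshadow, Finset.card_filter]
  rw [Finset.sum_congr rfl (fun i _ => h1 i), Finset.sum_comm]
  rw [Finset.card_eq_sum_ones]
  apply Finset.sum_congr rfl
  intro s hs
  obtain ⟨e, he, hse, hcs⟩ := mem_shadowSets.1 hs
  have := exactly_one_missing hr P hse hcs (hpart e he)
  rw [← Finset.card_filter]
  rw [eq_comm]; simpa using this


lemma cleaning {r : ℕ} (P : α → Fin r) (m : Fin r → ℕ) :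
    ∀ n (H : Finset (Finset α)), H.card ≤ n →
    (∑ i, (m i - 1) * (dshadow r P i H).card) < H.card →
    ∃ H', H' ⊆ H ∧ H'.Nonempty ∧ ∀ i, ∀ s ∈ dshadow r P i H', m i ≤ degH H' s := by
  intro n
  induction n with
  | zero =>
    intro H hle hlt
    omega
  | succ n ih =>
    intro H hle hlt
    by_cases hbad : ∃ i, ∃ s ∈ dshadow r P i H, degH H s < m i
    · obtain ⟨i, s, hs, hdeg⟩ := hbad
      set H'' := H.filter (fun e => ¬ s ⊆ e) with hH''
      have hsub : H'' ⊆ H := Finset.filter_subset _ _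
      have hcards : H''.card + degH H s = H.card := by
        rw [hH'', degH, Nat.add_comm]
        exact Finset.card_filter_add_card_filter_not (p := fun e => s ⊆ e)
      have hdeg1 : 1 ≤ degH H s := degH_pos hs
      have hdlt : (dshadow r P i H'').card < (dshadow r P i H).card := by
        apply Finset.card_lt_card
        rw [Finset.ssubset_iff_of_subset (dshadow_mono hsub)]
        refine ⟨s, hs, ?_⟩
        intro hmem
        obtain ⟨e, he, hse, -⟩ := mem_shadowSets.1 (Finset.mem_filter.1 hmem).1
        exact (Finset.mem_filter.1 he).2 hse
      have hdle : ∀ j, (dshadow r P j H'').card ≤ (dshadow r P j H).card :=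
        fun j => Finset.card_le_card (dshadow_mono hsub)
      have hmi : 1 ≤ m i := by omega
      -- sum bound
      have hsumle : (∑ j, (m j - 1) * (dshadow r P j H'').card) + (m i - 1) ≤
          ∑ j, (m j - 1) * (dshadow r P j H).card := by
        rw [← Finset.sum_erase_add _ _ (Finset.mem_univ i),
            ← Finset.sum_erase_add _ _ (Finset.mem_univ i)]
        have h1 : ∑ j ∈ Finset.univ.erase i, (m j - 1) * (dshadow r P j H'').card ≤
            ∑ j ∈ Finset.univ.erase i, (m j - 1) * (dshadow r P j H).card :=
          Finset.sum_le_sum (fun j _ => Nat.mul_le_mul_left _ (hdle j))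
        have h2 : (m i - 1) * (dshadow r P i H'').card + (m i - 1) ≤
            (m i - 1) * (dshadow r P i H).card := by
          have : (dshadow r P i H'').card + 1 ≤ (dshadow r P i H).card := hdlt
          calc (m i - 1) * (dshadow r P i H'').card + (m i - 1)
              = (m i - 1) * ((dshadow r P i H'').card + 1) := by ring
            _ ≤ (m i - 1) * (dshadow r P i H).card := Nat.mul_le_mul_left _ this
        omega
      have hlt'' : (∑ j, (m j - 1) * (dshadow r P j H'').card) < H''.card := by omega
      have hle'' : H''.card ≤ n := by omega
      obtain ⟨H', hH'sub, hne, hdegs⟩ := ih H'' hle'' hlt''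
      exact ⟨H', hH'sub.trans hsub, hne, hdegs⟩
    · push_neg at hbad
      refine ⟨H, Finset.Subset.refl _, ?_, hbad⟩
      rw [← Finset.card_pos]
      omega


lemma embed {β : Type} [DecidableEq β] {r : ℕ} (hr : 2 ≤ r) (P : α → Fin r)
    (H' : Finset (Finset α)) (hne : H'.Nonempty)
    (hunif : ∀ e ∈ H', e.card = r)
    (hpart : ∀ e ∈ H', ∀ i, (e.filter fun v => P v = i).card = 1)
    (c : β → Fin r) (a : Fin r → ℕ)
    (hdeg : ∀ i, ∀ s ∈ dshadow r P i H', a i ≤ degH H' s)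
    (W : Finset β) (ha : ∀ i, (W.filter fun v => c v = i).card ≤ a i) :
    ∀ es : List (Finset β), TightSeq r es → unionList es ⊆ W →
      (∀ e ∈ es, ∀ i, (e.filter fun v => c v = i).card = 1) →
      ∃ f : β → α, Set.InjOn f ↑(unionList es) ∧
        (∀ v ∈ unionList es, P (f v) = c v) ∧ ∀ e ∈ es, e.image f ∈ H' := by
  classical
  obtain ⟨h₀, hh₀⟩ := hne
  have hh₀ne : h₀.Nonempty := by
    rw [← Finset.card_pos, hunif h₀ hh₀]; omega
  obtain ⟨x₀, -⟩ := hh₀ne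
  intro es
  induction es with
  | nil => intro h; exact h.elim
  | cons e l ih =>
    intro hts hWsub hcol
    cases l with
    | nil =>
      -- base case
      have hUe : unionList [e] = e := by simp [unionList]
      set f : β → α := fun x =>
        if hx : ((h₀.filter fun u => P u = c x)).Nonempty then hx.choose else x₀ with hf
      have hfx : ∀ x : β, f x ∈ h₀ ∧ P (f x) = c x := by
        intro x
        have h1 := hpart h₀ hh₀ (c x)
        have hne2 : ((h₀.filter fun u => P u = c x)).Nonempty := by
          rw [← Finset.card_pos, h1]; omega
        have hspec := hne2.choose_spec
        rw [Finset.mem_filter] at hspec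
        rw [hf]; simp only [dif_pos hne2]
        exact hspec
      have hinj : Set.InjOn f ↑e := by
        intro x hx y hy hxy
        have hcx : c x = c y := by
          rw [← (hfx x).2, ← (hfx y).2, hxy]
        have h1 := hcol e (by simp) (c x)
        have hx' : x ∈ e.filter fun v => c v = c x := Finset.mem_filter.2 ⟨hx, rfl⟩
        have hy' : y ∈ e.filter fun v => c v = c x := Finset.mem_filter.2 ⟨hy, hcx.symm⟩
        exact Finset.card_le_one.1 (le_of_eq h1) x hx' y hy'
      refine ⟨f, by rw [hUe]; exact hinj, ?_, ?_⟩
      · intro v hv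
        exact (hfx v).2
      · intro e' he'
        simp only [List.mem_singleton] at he'
        subst he'
        have himg : e'.image f = h₀ := by
          apply Finset.eq_of_subset_of_card_le
          · intro u hu
            obtain ⟨x, -, rfl⟩ := Finset.mem_image.1 hu
            exact (hfx x).1
          · rw [Finset.card_image_of_injOn hinj, hts, hunif h₀ hh₀]
        rw [himg]; exact hh₀
    | cons ftl rest =>
      -- inductive step
      set tl := ftl :: rest with htl
      obtain ⟨v, hv, hvU, ⟨g, hg, hsub⟩, hins⟩ := tightSeq_union_insert hts
      set U := unionList tl with hU
      have hUW : U ⊆ W := by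
        intro x hx
        exact hWsub (by rw [hins]; exact Finset.mem_insert_of_mem hx)
      obtain ⟨f, hinj, hcolf, hedges⟩ := ih hts.2.2 hUW (fun e' he' => hcol e' (List.mem_cons_of_mem _ he'))
      have hecard : e.card = r := hts.1
      have hescard : (e \ {v}).card = r - 1 := by
        rw [Finset.card_sdiff_of_subset (by simpa using hv), hecard]; simp
      have hgU : g ⊆ U := subset_unionList hg
      have hesubU : (e \ {v} : Finset β) ⊆ U := hsub.trans hgU
      set s : Finset α := (e \ {v}).image f with hs
      have hinjes : Set.InjOn f ↑(e \ {v}) := hinj.mono (by exact_mod_cast hesubU)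
      have hscard : s.card = r - 1 := by
        rw [hs, Finset.card_image_of_injOn hinjes, hescard]
      have himg_g : g.image f ∈ H' := hedges g hg
      have hsimg : s ⊆ g.image f := Finset.image_subset_image hsub
      -- colours of e \ {v} avoid c v
      have hcnv : ∀ x ∈ e \ {v}, c x ≠ c v := by
        intro x hx hcx
        have h1 := hcol e (by simp) (c v)
        have hx' : x ∈ e.filter fun u => c u = c v :=
          Finset.mem_filter.2 ⟨(Finset.mem_sdiff.1 hx).1, hcx⟩
        have hv' : v ∈ e.filter fun u => c u = c v := Finset.mem_filter.2 ⟨hv, rfl⟩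
        exact (Finset.mem_sdiff.1 hx).2 (by
          simp [Finset.card_le_one.1 (le_of_eq h1) x hx' v hv'])
      have hsd : s ∈ dshadow r P (c v) H' := by
        rw [dshadow, Finset.mem_filter]
        refine ⟨mem_shadowSets.2 ⟨g.image f, himg_g, hsimg, hscard⟩, ?_⟩
        rw [Finset.filter_eq_empty_iff]
        intro u hu
        obtain ⟨x, hx, rfl⟩ := Finset.mem_image.1 hu
        rw [hcolf x (hesubU hx)]
        exact hcnv x hx
      have hdegs : a (c v) ≤ degH H' s := hdeg (c v) s hsd
      set B : Finset α := (U.filter fun u => c u = c v).image f with hB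
      have hBcard : B.card < a (c v) := by
        have h1 : B.card ≤ (U.filter fun u => c u = c v).card := Finset.card_image_le
        have h2 : (U.filter fun u => c u = c v).card < (W.filter fun u => c u = c v).card := by
          apply Finset.card_lt_card
          rw [Finset.ssubset_iff_of_subset (Finset.filter_subset_filter _ hUW)]
          refine ⟨v, Finset.mem_filter.2 ⟨hWsub (by rw [hins]; exact Finset.mem_insert_self _ _), rfl⟩, ?_⟩
          intro hmem
          exact hvU (Finset.mem_filter.1 hmem).1
        have h3 := ha (c v)
        omega
      set E : Finset (Finset α) := H'.filter fun h => s ⊆ h with hE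
      have hEdeg : E.card = degH H' s := rfl
      set φ : Finset α → α := fun h => if hne2 : (h \ s).Nonempty then hne2.choose else x₀ with hφ
      have hφs : ∀ h ∈ E, φ h ∈ h \ s ∧ h = insert (φ h) s := by
        intro h hh
        have hhH := (Finset.mem_filter.1 hh).1
        have hsh := (Finset.mem_filter.1 hh).2
        have hhd : (h \ s).card = 1 := by
          rw [Finset.card_sdiff_of_subset hsh, hunif h hhH, hscard]; omega
        have hne2 : (h \ s).Nonempty := by rw [← Finset.card_pos, hhd]; omega
        have hmem : φ h ∈ h \ s := by rw [hφ]; simp only [dif_pos hne2]; exact hne2.choose_spec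
        refine ⟨hmem, ?_⟩
        refine (Finset.eq_of_subset_of_card_le ?_ ?_).symm
        · intro x hx
          rcases Finset.mem_insert.1 hx with rfl | hx
          · exact (Finset.mem_sdiff.1 hmem).1
          · exact hsh hx
        · rw [Finset.card_insert_of_notMem (Finset.mem_sdiff.1 hmem).2, hscard,
            hunif h hhH]
          omega
      have hclaim : ∃ h ∈ E, φ h ∉ B := by
        by_contra hcon
        push_neg at hcon
        have : E.card ≤ B.card := by
          apply Finset.card_le_card_of_injOn φ hcon
          intro h1 hh1 h2 hh2 hphi
          rw [(hφs h1 (by simpa using hh1)).2, (hφs h2 (by simpa using hh2)).2, hphi]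
        omega
      obtain ⟨h1, hh1E, hφB⟩ := hclaim
      set w := φ h1 with hwdef
      have hwmem := (hφs h1 hh1E).1
      have hins1 := (hφs h1 hh1E).2
      have hh1H : h1 ∈ H' := (Finset.mem_filter.1 hh1E).1
      have hPw : P w = c v := by
        have h2 := hpart h1 hh1H (c v)
        obtain ⟨u, hu⟩ := Finset.card_eq_one.1 h2
        have humem : u ∈ h1 ∧ P u = c v := by
          have : u ∈ h1.filter fun x => P x = c v := hu ▸ Finset.mem_singleton_self u
          exact ⟨(Finset.mem_filter.1 this).1, (Finset.mem_filter.1 this).2⟩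
        have hus : u ∉ s := by
          intro hus
          obtain ⟨x, hx, rfl⟩ := Finset.mem_image.1 hus
          rw [hcolf x (hesubU hx)] at humem
          exact hcnv x hx humem.2
        have : u ∈ h1 \ s := Finset.mem_sdiff.2 ⟨humem.1, hus⟩
        have huw : u = w := by
          have hd1 : (h1 \ s).card = 1 := by
            rw [Finset.card_sdiff_of_subset (Finset.mem_filter.1 hh1E).2, hunif h1 hh1H, hscard]; omega
          obtain ⟨z, hz⟩ := Finset.card_eq_one.1 hd1
          rw [hz] at this hwmem
          rw [Finset.mem_singleton.1 this, hwdef]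
          exact (Finset.mem_singleton.1 hwmem).symm
        rw [← huw]; exact humem.2
      have hwnotim : ∀ u ∈ U, f u ≠ w := by
        intro u hu hfu
        apply hφB
        rw [← hfu]
        exact Finset.mem_image_of_mem f
          (Finset.mem_filter.2 ⟨hu, by rw [← hcolf u hu, hfu, hPw]⟩)
      set f' := Function.update f v w with hf'
      have hf'U : ∀ x ∈ U, f' x = f x := by
        intro x hx
        have : x ≠ v := fun h => hvU (h ▸ hx)
        rw [hf', Function.update_of_ne this]
      have hf'v : f' v = w := by rw [hf']; simp
      refine ⟨f', ?_, ?_, ?_⟩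
      · rw [hins]
        intro x hx y hy hxy
        rw [Finset.coe_insert, Set.mem_insert_iff] at hx hy
        rcases hx with rfl | hx
        · rcases hy with rfl | hy
          · rfl
          · exfalso
            rw [hf'v, hf'U y hy] at hxy
            exact hwnotim y hy hxy.symm
        · rcases hy with rfl | hy
          · exfalso
            rw [hf'v, hf'U x hx] at hxy
            exact hwnotim x hx hxy
          · rw [hf'U x hx, hf'U y hy] at hxy
            exact hinj hx hy hxy
      · intro u hu
        rw [hins] at hu
        rcases Finset.mem_insert.1 hu with rfl | hu
        · rw [hf'v, hPw]
        · rw [hf'U u hu]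
          exact hcolf u hu
      · intro e' he'
        rcases List.mem_cons.1 he' with rfl | he'
        · have heins : e' = insert v (e' \ {v}) := by
            ext x
            simp only [Finset.mem_insert, Finset.mem_sdiff, Finset.mem_singleton]
            constructor
            · intro hx
              by_cases hxv : x = v
              · exact Or.inl hxv
              · exact Or.inr ⟨hx, hxv⟩
            · rintro (rfl | ⟨hx, -⟩)
              · exact hv
              · exact hx
          rw [heins, Finset.image_insert, hf'v]
          have : (e' \ {v}).image f' = s := by
            rw [hs]
            apply Finset.image_congr
            intro x hx
            rw [Finset.mem_coe] at hx
            exact hf'U x (hesubU hx)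
          rw [this, ← hins1]
          exact hh1H
        · have : e'.image f' = e'.image f := by
            apply Finset.image_congr
            intro x hx
            rw [Finset.mem_coe] at hx
            exact hf'U x (subset_unionList he' hx)
          rw [this]
          exact hedges e' he'


lemma sup_id_eq_unionList (es : List (Finset α)) :
    es.toFinset.sup id = unionList es := by
  induction es with
  | nil => simp [unionList]
  | cons e l ih =>
    rw [List.toFinset_cons, Finset.sup_insert, ih]
    rfl

end KTmp

/-- **Theorem (main result).** Let `r ≥ 2` and let `H` be an `r`-partite
`r`-uniform hypergraph (partition given by the colouring `P`). If `H` has more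
than `((t-1)/r)·|∂H|` edges, then `H` contains every tight `r`-tree with `t`
edges. -/
theorem rpartite_kalai_shadow {α : Type} [DecidableEq α] (r t : ℕ) (hr : 2 ≤ r)
    (H : Finset (Finset α)) (hunif : ∀ e ∈ H, e.card = r)
    (P : α → Fin r) (hpart : ∀ e ∈ H, ∀ i, (e.filter fun v => P v = i).card = 1)
    (hcard : ((t : ℝ) - 1) / r * (shadowSets r H).card < H.card) :
    ∀ (β : Type) [DecidableEq β] (T : Finset (Finset β)),
      IsTightTree r T → T.card = t → HContains H T := by
  classical
  intro β _ T hTT hTc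
  obtain ⟨es, hts, hesT⟩ := hTT
  have hnodup := KTmp.tightSeq_nodup hts
  have hlen : es.length = t := by
    rw [← hTc, ← hesT, List.toFinset_card_of_nodup hnodup]
  have hne : es ≠ [] := by
    cases es with
    | nil => exact hts.elim
    | cons a l => simp
  have ht1 : 1 ≤ t := by
    rw [← hlen]
    exact List.length_pos_iff.2 hne
  haveI : NeZero r := ⟨by omega⟩
  haveI : Nonempty (Fin r) := ⟨⟨0, by omega⟩⟩
  obtain ⟨c0, hc0⟩ := KTmp.tightSeq_colouring (by omega : 1 ≤ r) hts
  set W := KTmp.unionList es with hW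
  set a0 : Fin r → ℕ := fun j => (W.filter fun v => c0 v = j).card with ha0
  have hWcard : W.card + 1 = es.length + r := KTmp.tightSeq_union_card (by omega) hts
  have ha0pos : ∀ j, 1 ≤ a0 j := by
    intro j
    cases es with
    | nil => exact hts.elim
    | cons e l =>
      have h1 := hc0 e (by simp) j
      have h2 : (e.filter fun v => c0 v = j).Nonempty := by
        rw [← Finset.card_pos, h1]; omega
      obtain ⟨v, hv⟩ := h2
      rw [Finset.mem_filter] at hv
      exact Finset.card_pos.2 ⟨v, Finset.mem_filter.2
        ⟨KTmp.subset_unionList (List.mem_cons_self) hv.1, hv.2⟩⟩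
  have ha0sum : ∑ j, a0 j = W.card :=
    (Finset.card_eq_sum_card_fiberwise (fun x _ => Finset.mem_univ (c0 x))).symm
  have hrsum : ∑ _j : Fin r, 1 = r := by simp
  have hsum1 : ∑ j, (a0 j - 1) = t - 1 := by
    have h1 : ∑ j, ((a0 j - 1) + 1) = ∑ j, a0 j :=
      Finset.sum_congr rfl (fun j _ => by have := ha0pos j; omega)
    rw [Finset.sum_add_distrib, hrsum] at h1
    omega
  set d : Fin r → ℕ := fun i => (KTmp.dshadow r P i H).card with hd
  have hD : (shadowSets r H).card = ∑ i, d i :=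
    KTmp.shadow_card_partition (by omega) P hpart
  set F : Fin r → ℕ := fun k => ∑ i, (a0 (i + k) - 1) * d i with hF
  have hFsum : ∑ k, F k = (t - 1) * (shadowSets r H).card := by
    rw [hF, Finset.sum_comm, hD, Finset.mul_sum]
    apply Finset.sum_congr rfl
    intro i _
    rw [← Finset.sum_mul]
    congr 1
    rw [← hsum1]
    exact Fintype.sum_equiv (Equiv.addLeft i) _ _ (fun k => rfl)
  have hk : ∃ k, r * F k ≤ (t - 1) * (shadowSets r H).card := by
    by_contra hcon
    push_neg at hcon
    have h1 : ∑ _k : Fin r, (t - 1) * (shadowSets r H).card < ∑ k, r * F k :=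
      Finset.sum_lt_sum_of_nonempty (Finset.univ_nonempty) (fun k _ => hcon k)
    have h2 : ∑ k, r * F k = r * ((t - 1) * (shadowSets r H).card) := by
      rw [← Finset.mul_sum, hFsum]
    have h3 : ∑ _k : Fin r, (t - 1) * (shadowSets r H).card =
        r * ((t - 1) * (shadowSets r H).card) := by
      rw [Finset.sum_const, Finset.card_univ, Fintype.card_fin, smul_eq_mul]
    rw [h2, h3] at h1
    exact lt_irrefl _ h1
  obtain ⟨k, hk⟩ := hk
  have hFlt : F k < H.card := by
    have hcastS : ((r * F k : ℕ) : ℝ) ≤ (((t - 1) * (shadowSets r H).card : ℕ) : ℝ) :=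
      Nat.cast_le.2 hk
    push_cast at hcastS
    rw [Nat.cast_sub ht1] at hcastS
    push_cast at hcastS
    have hrpos : (0 : ℝ) < r := by positivity
    have h2 : (F k : ℝ) ≤ ((t : ℝ) - 1) / r * (shadowSets r H).card := by
      rw [div_mul_eq_mul_div, le_div_iff₀ hrpos]
      linarith
    have h3 : (F k : ℝ) < H.card := lt_of_le_of_lt h2 hcard
    exact_mod_cast h3
  set c : β → Fin r := fun v => c0 v - k with hc
  set m : Fin r → ℕ := fun i => a0 (i + k) with hmdef
  have hfiltc : ∀ (s : Finset β) (i : Fin r),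
      (s.filter fun v => c v = i) = (s.filter fun v => c0 v = i + k) := by
    intro s i
    apply Finset.filter_congr
    intro x _
    exact sub_eq_iff_eq_add
  have hm : ∀ i, (W.filter fun v => c v = i).card = m i := by
    intro i
    rw [hfiltc]
  have hcol' : ∀ e ∈ es, ∀ i, (e.filter fun v => c v = i).card = 1 := by
    intro e he i
    rw [hfiltc]
    exact hc0 e he (i + k)
  have hlt : (∑ i, (m i - 1) * (KTmp.dshadow r P i H).card) < H.card := hFlt
  obtain ⟨H', hsub, hne', hdegs⟩ := KTmp.cleaning P m H.card H (le_refl _) hlt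
  have hunif' : ∀ e ∈ H', e.card = r := fun e he => hunif e (hsub he)
  have hpart' : ∀ e ∈ H', ∀ i, (e.filter fun v => P v = i).card = 1 :=
    fun e he => hpart e (hsub he)
  obtain ⟨f, hinj, hcolf, hedges⟩ := KTmp.embed hr P H' hne' hunif' hpart' c m hdegs W
    (fun i => le_of_eq (hm i)) es hts (Finset.Subset.refl _) hcol'
  refine ⟨f, ?_, ?_⟩
  · rw [← hesT, KTmp.sup_id_eq_unionList]
    exact hinj
  · intro e he
    rw [← hesT, List.mem_toFinset] at he
    exact hsub (hedges e he)
end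

section
/- For all natural numbers t₁, t₂, every bipartite graph G with average degree strictly greater than t₁ + t₂ - 2 has a non-empty subgraph G' with bipartition classes V₁ and V₂ such that every vertex in V₁ has degree at least t₁ in G' and every vertex in V₂ has degree at least t₂ in G'. -/
open Finset

variable {V : Type} [Fintype V] [DecidableEq V]

omit [Fintype V] in
/-- Erasing a vertex from `S` decreases the inside-edge count (counted from the
`true` class) by exactly the inside-degree of that vertex. -/
lemma eCount_erase (G : SimpleGraph V) [DecidableRel G.Adj] (c : V → Bool)
    (hc : ∀ v w, G.Adj v w → c v ≠ c w) (S : Finset V) (v : V) (hv : v ∈ S) :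
    (∑ u ∈ S.filter (fun x => c x = true), (S.filter (G.Adj u)).card)
      = (∑ u ∈ (S.erase v).filter (fun x => c x = true),
          ((S.erase v).filter (G.Adj u)).card) + (S.filter (G.Adj v)).card := by
  rcases Bool.eq_false_or_eq_true (c v) with hcv | hcv
  · -- c v = true : remove the term of v; other terms unchanged
    have hvmem : v ∈ S.filter (fun x => c x = true) := by simp [hv, hcv]
    rw [Finset.filter_erase, ← Finset.add_sum_erase _ _ hvmem, add_comm]
    congr 1
    apply Finset.sum_congr rfl
    intro u hu
    congr 1
    rw [Finset.filter_erase]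
    have hnm : v ∉ S.filter (G.Adj u) := by
      intro hmem
      rw [Finset.mem_filter] at hmem
      rw [Finset.mem_erase, Finset.mem_filter] at hu
      exact hc u v hmem.2 (hu.2.2.trans hcv.symm)
    rw [Finset.erase_eq_of_notMem hnm]
  · -- c v = false : the true class is unchanged; each term drops by [Adj u v]
    have hfilter : (S.erase v).filter (fun x => c x = true)
        = S.filter (fun x => c x = true) := by
      rw [Finset.filter_erase, Finset.erase_eq_of_notMem]
      simp [hcv]
    rw [hfilter]
    have hterm : ∀ u ∈ S.filter (fun x => c x = true),
        (S.filter (G.Adj u)).card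
          = ((S.erase v).filter (G.Adj u)).card + (if G.Adj u v then 1 else 0) := by
      intro u hu
      rw [Finset.filter_erase]
      by_cases hadj : G.Adj u v
      · have hvmem : v ∈ S.filter (G.Adj u) := by simp [hv, hadj]
        rw [if_pos hadj, Finset.card_erase_add_one hvmem]
      · rw [if_neg hadj, Finset.erase_eq_of_notMem (by simp [hadj]), add_zero]
    rw [Finset.sum_congr rfl hterm, Finset.sum_add_distrib]
    congr 1
    rw [Finset.sum_boole]
    have : (S.filter (fun x => c x = true)).filter (fun u => G.Adj u v)
        = S.filter (G.Adj v) := by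
      rw [Finset.filter_filter]
      apply Finset.filter_congr
      intro u hu
      constructor
      · rintro ⟨-, h⟩; exact h.symm
      · intro h
        refine ⟨?_, h.symm⟩
        have := hc v u h
        rw [hcv] at this
        simpa using (Bool.not_eq_false _).mp (Ne.symm this)
    simp [this]

/-- The key deletion lemma: if the inside-edge count of `S` beats the invariant,
there is a nonempty `T ⊆ S` with the required minimum inside-degrees. -/
lemma key_deletion (t₁ t₂ : ℕ) (G : SimpleGraph V) [DecidableRel G.Adj] (c : V → Bool)
    (hc : ∀ v w, G.Adj v w → c v ≠ c w) :
    ∀ (n : ℕ) (S : Finset V), S.card ≤ n →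
      ((t₁ : ℤ) - 1) * (S.filter (fun x => c x = true)).card
        + ((t₂ : ℤ) - 1) * (S.filter (fun x => c x = false)).card
        < ∑ u ∈ S.filter (fun x => c x = true), ((S.filter (G.Adj u)).card : ℤ) →
      ∃ T, T ⊆ S ∧ T.Nonempty ∧
        (∀ v ∈ T, c v = true → t₁ ≤ (T.filter (G.Adj v)).card) ∧
        (∀ v ∈ T, c v = false → t₂ ≤ (T.filter (G.Adj v)).card) := by
  intro n
  induction n with
  | zero =>
    intro S hS hinv
    rw [Nat.le_zero, Finset.card_eq_zero] at hS
    subst hS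
    simp at hinv
  | succ n ih =>
    intro S hS hinv
    by_cases hgood : ∀ v ∈ S, (c v = true → t₁ ≤ (S.filter (G.Adj v)).card)
        ∧ (c v = false → t₂ ≤ (S.filter (G.Adj v)).card)
    · refine ⟨S, le_refl _, ?_, fun v hv => (hgood v hv).1, fun v hv => (hgood v hv).2⟩
      rcases Finset.eq_empty_or_nonempty S with rfl | hne
      · simp at hinv
      · exact hne
    · push_neg at hgood
      obtain ⟨v, hv, hbad⟩ := hgood
      have hcard : (S.erase v).card ≤ n := by
        have := Finset.card_erase_add_one hv
        omega
      have hE := eCount_erase G c hc S v hv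
      have hEZ : (∑ u ∈ S.filter (fun x => c x = true), ((S.filter (G.Adj u)).card : ℤ))
          = (∑ u ∈ (S.erase v).filter (fun x => c x = true),
              (((S.erase v).filter (G.Adj u)).card : ℤ))
            + ((S.filter (G.Adj v)).card : ℤ) := by
        exact_mod_cast congrArg (Nat.cast : ℕ → ℤ) hE
      rcases Bool.eq_false_or_eq_true (c v) with hcv | hcv
      · -- c v = true, inside-degree < t₁
        have hdeg : (S.filter (G.Adj v)).card < t₁ := by
          by_contra h
          push_neg at h
          have := (hbad (fun _ => h)).1
          rw [hcv] at this
          cases this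
        have hA : ((S.filter (fun x => c x = true)).card : ℤ)
            = ((S.erase v).filter (fun x => c x = true)).card + 1 := by
          have hvmem : v ∈ S.filter (fun x => c x = true) := by simp [hv, hcv]
          rw [Finset.filter_erase]
          exact_mod_cast (Finset.card_erase_add_one hvmem).symm
        have hB : (S.filter (fun x => c x = false)).card
            = ((S.erase v).filter (fun x => c x = false)).card := by
          rw [Finset.filter_erase, Finset.erase_eq_of_notMem]
          simp [hcv]
        obtain ⟨T, hT, h2, h3, h4⟩ := ih (S.erase v) hcard (by
          have hd : ((S.filter (G.Adj v)).card : ℤ) ≤ (t₁ : ℤ) - 1 := by omega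
          rw [hB] at hinv
          have := hinv
          rw [hA, hEZ] at this
          linarith)
        exact ⟨T, hT.trans (Finset.erase_subset _ _), h2, h3, h4⟩
      · -- c v = false, inside-degree < t₂
        have hdeg : (S.filter (G.Adj v)).card < t₂ := by
          have h1 : c v = true → t₁ ≤ (S.filter (G.Adj v)).card := by
            intro h; rw [h] at hcv; cases hcv
          exact (hbad h1).2
        have hA : (S.filter (fun x => c x = true)).card
            = ((S.erase v).filter (fun x => c x = true)).card := by
          rw [Finset.filter_erase, Finset.erase_eq_of_notMem]
          simp [hcv]
        have hB : ((S.filter (fun x => c x = false)).card : ℤ)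
            = ((S.erase v).filter (fun x => c x = false)).card + 1 := by
          have hvmem : v ∈ S.filter (fun x => c x = false) := by simp [hv, hcv]
          rw [Finset.filter_erase]
          exact_mod_cast (Finset.card_erase_add_one hvmem).symm
        obtain ⟨T, hT, h2, h3, h4⟩ := ih (S.erase v) hcard (by
          have hd : ((S.filter (G.Adj v)).card : ℤ) ≤ (t₂ : ℤ) - 1 := by omega
          rw [hA] at hinv
          have := hinv
          rw [hB, hEZ] at this
          linarith)
        exact ⟨T, hT.trans (Finset.erase_subset _ _), h2, h3, h4⟩

/-- Wrapper: from the invariant at `univ` for a classifier `c`, produce the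
subgraph with `V₁` the true class. -/
lemma wrapper (t₁ t₂ : ℕ) (G : SimpleGraph V) [DecidableRel G.Adj] (c : V → Bool)
    (hc : ∀ v w, G.Adj v w → c v ≠ c w)
    (hinv : ((t₁ : ℤ) - 1) * ((univ : Finset V).filter (fun x => c x = true)).card
        + ((t₂ : ℤ) - 1) * ((univ : Finset V).filter (fun x => c x = false)).card
        < ∑ u ∈ (univ : Finset V).filter (fun x => c x = true),
            (((univ : Finset V).filter (G.Adj u)).card : ℤ)) :
    ∃ (G' : G.Subgraph) (V₁ V₂ : Set V),
      G'.verts.Nonempty ∧ V₁ ∪ V₂ = G'.verts ∧ Disjoint V₁ V₂ ∧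
      (∀ v w, G'.Adj v w → (v ∈ V₁ ∧ w ∈ V₂) ∨ (v ∈ V₂ ∧ w ∈ V₁)) ∧
      (∀ v ∈ V₁, t₁ ≤ {w | G'.Adj v w}.ncard) ∧
      (∀ v ∈ V₂, t₂ ≤ {w | G'.Adj v w}.ncard) := by
  obtain ⟨T, -, hTne, h1, h2⟩ :=
    key_deletion t₁ t₂ G c hc (Fintype.card V) univ (by simp) hinv
  refine ⟨(⊤ : G.Subgraph).induce ↑T, {v | v ∈ T ∧ c v = true},
    {v | v ∈ T ∧ c v = false}, ?_, ?_, ?_, ?_, ?_, ?_⟩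
  · obtain ⟨t, ht⟩ := hTne
    exact ⟨t, by simp [SimpleGraph.Subgraph.induce_verts, ht]⟩
  · ext v
    simp only [SimpleGraph.Subgraph.induce_verts, SimpleGraph.Subgraph.verts_top,
      Set.mem_union, Set.mem_setOf_eq, Set.univ_inter, Finset.coe_sort_coe,
      Set.mem_univ, Set.mem_inter_iff, true_and, Finset.mem_coe]
    rcases Bool.eq_false_or_eq_true (c v) with h | h <;> simp [h]
  · rw [Set.disjoint_left]
    rintro v ⟨-, h1'⟩ ⟨-, h2'⟩
    rw [h1'] at h2'; cases h2'
  · intro v w hadj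
    obtain ⟨hvT, hwT, hGadj⟩ := hadj
    have hGadj' : G.Adj v w := hGadj
    rcases Bool.eq_false_or_eq_true (c v) with h | h
    · left
      refine ⟨⟨hvT, h⟩, hwT, ?_⟩
      have := hc v w hGadj'
      rw [h] at this
      simpa using (Bool.not_eq_true _).mp (Ne.symm this)
    · right
      refine ⟨⟨hvT, h⟩, hwT, ?_⟩
      have := hc v w hGadj'
      rw [h] at this
      simpa using (Bool.not_eq_false _).mp (Ne.symm this)
  · rintro v ⟨hvT, hcv⟩
    have hset : {w | ((⊤ : G.Subgraph).induce ↑T).Adj v w} = ↑(T.filter (G.Adj v)) := by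
      ext w
      simp only [Set.mem_setOf_eq, SimpleGraph.Subgraph.induce_adj, Finset.mem_coe,
        Finset.coe_mem, SimpleGraph.Subgraph.top_adj, Finset.mem_filter]
      constructor
      · rintro ⟨-, hw, h⟩; exact ⟨hw, h⟩
      · rintro ⟨hw, h⟩; exact ⟨hvT, hw, h⟩
    rw [hset, Set.ncard_coe_finset]
    exact h1 v hvT hcv
  · rintro v ⟨hvT, hcv⟩
    have hset : {w | ((⊤ : G.Subgraph).induce ↑T).Adj v w} = ↑(T.filter (G.Adj v)) := by
      ext w
      simp only [Set.mem_setOf_eq, SimpleGraph.Subgraph.induce_adj, Finset.mem_coe,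
        Finset.coe_mem, SimpleGraph.Subgraph.top_adj, Finset.mem_filter]
      constructor
      · rintro ⟨-, hw, h⟩; exact ⟨hw, h⟩
      · rintro ⟨hw, h⟩; exact ⟨hvT, hw, h⟩
    rw [hset, Set.ncard_coe_finset]
    exact h2 v hvT hcv

/-- **Corollary.** For all natural numbers `t₁, t₂`, every bipartite graph `G`
with average degree strictly greater than `t₁ + t₂ - 2` has a non-empty
subgraph `G'` with bipartition classes `V₁`, `V₂` such that every vertex in
`Vᵢ` has degree at least `tᵢ` in `G'`, for `i = 1, 2`. -/
theorem bipartite_min_degree_subgraph {V : Type} [Fintype V] [DecidableEq V]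
    [Nonempty V] (t₁ t₂ : ℕ) (G : SimpleGraph V) [DecidableRel G.Adj]
    (hbip : ∃ c : V → Bool, ∀ v w, G.Adj v w → c v ≠ c w)
    (hdeg : (t₁ : ℝ) + t₂ - 2 < 2 * G.edgeFinset.card / Fintype.card V) :
    ∃ (G' : G.Subgraph) (V₁ V₂ : Set V),
      G'.verts.Nonempty ∧ V₁ ∪ V₂ = G'.verts ∧ Disjoint V₁ V₂ ∧
      (∀ v w, G'.Adj v w → (v ∈ V₁ ∧ w ∈ V₂) ∨ (v ∈ V₂ ∧ w ∈ V₁)) ∧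
      (∀ v ∈ V₁, t₁ ≤ {w | G'.Adj v w}.ncard) ∧
      (∀ v ∈ V₂, t₂ ≤ {w | G'.Adj v w}.ncard) := by
  obtain ⟨c, hc⟩ := hbip
  -- basic real arithmetic: (t₁+t₂-2) * n < 2E
  have hn : (0 : ℝ) < Fintype.card V := by
    exact_mod_cast Fintype.card_pos
  have hR : ((t₁ : ℝ) + t₂ - 2) * (Fintype.card V : ℝ)
      < 2 * (G.edgeFinset.card : ℝ) := by
    rw [lt_div_iff₀ hn] at hdeg
    exact hdeg
  have hZ : ((t₁ : ℤ) + t₂ - 2) * (Fintype.card V : ℤ)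
      < 2 * (G.edgeFinset.card : ℤ) := by
    exact_mod_cast hR
  -- degree sums
  have hdegsum : ∀ u : V, G.degree u = ((univ : Finset V).filter (G.Adj u)).card := by
    intro u
    rw [← SimpleGraph.card_neighborFinset_eq_degree]
    congr 1
    ext w
    simp [SimpleGraph.mem_neighborFinset]
  have hsum : (∑ u ∈ (univ : Finset V).filter (fun x => c x = true),
        (((univ : Finset V).filter (G.Adj u)).card : ℤ))
      + (∑ u ∈ (univ : Finset V).filter (fun x => c x = false),
        (((univ : Finset V).filter (G.Adj u)).card : ℤ))
      = 2 * G.edgeFinset.card := by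
    have hsplit : (∑ u ∈ (univ : Finset V).filter (fun x => c x = true), (G.degree u : ℤ))
        + (∑ u ∈ (univ : Finset V).filter (fun x => c x = false), (G.degree u : ℤ))
        = ∑ u : V, (G.degree u : ℤ) := by
      rw [← Finset.sum_filter_add_sum_filter_not (univ : Finset V) (fun x => c x = true)]
      congr 1
      apply Finset.sum_congr _ (fun _ _ => rfl)
      apply Finset.filter_congr
      intro u _
      simp
    have htot : ∑ u : V, (G.degree u : ℤ) = 2 * G.edgeFinset.card := by
      exact_mod_cast congrArg (Nat.cast : ℕ → ℤ) G.sum_degrees_eq_twice_card_edges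
    simp only [← hdegsum]
    rw [hsplit, htot]
  -- cardinalities
  have hcards : ((univ : Finset V).filter (fun x => c x = true)).card
      + ((univ : Finset V).filter (fun x => c x = false)).card = Fintype.card V := by
    have h := Finset.card_filter_add_card_filter_not
      (s := (univ : Finset V)) (p := fun x => c x = true)
    have h2 : (univ.filter (fun a => ¬ c a = true)) = univ.filter (fun x => c x = false) := by
      apply Finset.filter_congr; intro u _; simp
    rw [h2] at h
    simpa using h
  set a : ℤ := (((univ : Finset V).filter (fun x => c x = true)).card : ℤ) with ha
  set b : ℤ := (((univ : Finset V).filter (fun x => c x = false)).card : ℤ) with hb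
  have habn : a + b = (Fintype.card V : ℤ) := by rw [ha, hb]; exact_mod_cast hcards
  -- Either classifier c or its negation works
  by_cases hcase : ((t₁ : ℤ) - 1) * a + ((t₂ : ℤ) - 1) * b
      < ∑ u ∈ (univ : Finset V).filter (fun x => c x = true),
          (((univ : Finset V).filter (G.Adj u)).card : ℤ)
  · exact wrapper t₁ t₂ G c hc hcase
  · push_neg at hcase
    have hcase2 : ((t₁ : ℤ) - 1) * b + ((t₂ : ℤ) - 1) * a
        < ∑ u ∈ (univ : Finset V).filter (fun x => c x = false),
            (((univ : Finset V).filter (G.Adj u)).card : ℤ) := by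
      have : ((t₁ : ℤ) - 1) * a + ((t₂ : ℤ) - 1) * b + (((t₁ : ℤ) - 1) * b
          + ((t₂ : ℤ) - 1) * a) = ((t₁ : ℤ) + t₂ - 2) * Fintype.card V := by
        rw [← habn]; ring
      linarith
    have hc' : ∀ v w, G.Adj v w → (fun x => !c x) v ≠ (fun x => !c x) w := by
      intro v w h hne
      exact hc v w h (by simpa using hne)
    have hrw1 : (univ : Finset V).filter (fun x => (!c x) = true)
        = (univ : Finset V).filter (fun x => c x = false) := by
      apply Finset.filter_congr; intro u _; simp
    have hrw2 : (univ : Finset V).filter (fun x => (!c x) = false)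
        = (univ : Finset V).filter (fun x => c x = true) := by
      apply Finset.filter_congr; intro u _; simp
    apply wrapper t₁ t₂ G (fun x => !c x) hc'
    rw [hrw1, hrw2]
    exact hcase2
end

section
/- Let r ≥ 2 and let H be an r-uniform hypergraph on n vertices with more than (t-1)·C(n, r-1) edges. Then H contains (as a subhypergraph) every tight r-tree T having t edges. -/
section Aux

variable {α β : Type} [DecidableEq α] [DecidableEq β]

/-- vertex set of a list of edges -/
def Vtx (es : List (Finset β)) : Finset β := es.foldr (· ∪ ·) ∅

@[simp] lemma Vtx_nil : Vtx ([] : List (Finset β)) = ∅ := rfl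
@[simp] lemma Vtx_cons (e : Finset β) (l : List (Finset β)) : Vtx (e :: l) = e ∪ Vtx l := rfl

lemma subset_Vtx {g : Finset β} {l : List (Finset β)} (h : g ∈ l) : g ⊆ Vtx l := by
  induction l with
  | nil => cases h
  | cons a l ih =>
    rcases List.mem_cons.1 h with rfl | h
    · exact Finset.subset_union_left
    · exact (ih h).trans Finset.subset_union_right

lemma union_eq_insert {e W : Finset β} {v : β} (hv : v ∈ e) (hsub : e \ {v} ⊆ W) :
    e ∪ W = insert v W := by
  apply Finset.Subset.antisymm
  · apply Finset.union_subset
    · intro w hw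
      by_cases hwv : w = v
      · exact hwv ▸ Finset.mem_insert_self _ _
      · exact Finset.mem_insert_of_mem (hsub (Finset.mem_sdiff.2 ⟨hw, by simp [hwv]⟩))
    · exact Finset.subset_insert _ _
  · exact Finset.insert_subset (Finset.mem_union_left _ hv) Finset.subset_union_right

lemma tightSeq_nodup {r : ℕ} : ∀ {es : List (Finset β)}, TightSeq r es → es.Nodup
  | [], h => h.elim
  | [e], _ => List.nodup_singleton e
  | e :: f :: rest, ⟨_, ⟨v, hv, hvn, _⟩, hts⟩ => by
    refine List.nodup_cons.2 ⟨?_, tightSeq_nodup hts⟩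
    intro hmem
    exact hvn (subset_Vtx hmem hv)

lemma tightSeq_vtx_card {r : ℕ} (hr : 1 ≤ r) :
    ∀ {es : List (Finset β)}, TightSeq r es → (Vtx es).card ≤ r - 1 + es.length
  | [], h => h.elim
  | [e], h => by
    simp only [Vtx_cons, Vtx_nil, Finset.union_empty, List.length_singleton]
    rw [h]; omega
  | e :: f :: rest, ⟨hc, ⟨v, hv, hvn, g, hg, hsub⟩, hts⟩ => by
    have hW : e \ {v} ⊆ Vtx (f :: rest) := hsub.trans (subset_Vtx hg)
    have h1 : Vtx (e :: f :: rest) = insert v (Vtx (f :: rest)) := by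
      rw [Vtx_cons]; exact union_eq_insert hv hW
    have h2 := tightSeq_vtx_card hr hts
    calc (Vtx (e :: f :: rest)).card ≤ (Vtx (f :: rest)).card + 1 := by
          rw [h1]; exact Finset.card_insert_le _ _
      _ ≤ r - 1 + (e :: f :: rest).length := by simp at h2 ⊢; omega

lemma sup_toFinset (l : List (Finset β)) : l.toFinset.sup id = Vtx l := by
  induction l with
  | nil => simp
  | cons a l ih => simp [Finset.sup_insert, ih]

lemma clean (r t : ℕ) :
    ∀ (𝒮 H : Finset (Finset α)),
    (∀ e ∈ H, ∀ S ⊆ e, S.card = r - 1 → S ∈ 𝒮) →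
    ∃ H' ⊆ H,
      (∀ S : Finset α, S.card = r - 1 → (∃ e ∈ H', S ⊆ e) →
        t ≤ (H'.filter (S ⊆ ·)).card) ∧
      H.card ≤ H'.card + (t - 1) * 𝒮.card := by
  intro 𝒮
  induction 𝒮 using Finset.strongInduction with
  | _ 𝒮 ih =>
    intro H hH
    by_cases hgood : ∀ S : Finset α, S.card = r - 1 → (∃ e ∈ H, S ⊆ e) →
        t ≤ (H.filter (S ⊆ ·)).card
    · exact ⟨H, Finset.Subset.refl H, hgood, Nat.le_add_right _ _⟩
    · push_neg at hgood
      obtain ⟨S, hScard, ⟨e, heH, hSe⟩, hdeg⟩ := hgood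
      have hS𝒮 : S ∈ 𝒮 := hH e heH S hSe hScard
      obtain ⟨H', hsub, hgood', hbound⟩ :=
        ih (𝒮.erase S) (Finset.erase_ssubset hS𝒮) (H.filter (fun e => ¬ S ⊆ e))
          (fun e' he' S' hS' hcard' => by
            have heH' := Finset.mem_filter.1 he'
            refine Finset.mem_erase.2 ⟨?_, hH e' heH'.1 S' hS' hcard'⟩
            rintro rfl; exact heH'.2 hS')
      refine ⟨H', hsub.trans (Finset.filter_subset _ _), hgood', ?_⟩
      have hsplit : (H.filter (S ⊆ ·)).card + (H.filter (fun e => ¬ S ⊆ e)).card = H.card := by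
        have := Finset.card_filter_add_card_filter_not (p := (S ⊆ ·)) (s := H)
        convert this using 3
      have hc1 : 1 ≤ 𝒮.card := Finset.card_pos.2 ⟨S, hS𝒮⟩
      have hce : (𝒮.erase S).card = 𝒮.card - 1 := Finset.card_erase_of_mem hS𝒮
      obtain ⟨d, hd⟩ : ∃ d, 𝒮.card = d + 1 := ⟨𝒮.card - 1, (Nat.sub_add_cancel hc1).symm⟩
      rw [hd] at hce ⊢
      simp only [Nat.add_sub_cancel] at hce
      rw [hce] at hbound
      have : (t - 1) * (d + 1) = (t - 1) * d + (t - 1) := Nat.mul_succ _ _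
      omega

lemma greedy (r t : ℕ) (hr : 1 ≤ r) (H' : Finset (Finset α))
    (hu : ∀ e ∈ H', e.card = r)
    (good : ∀ S : Finset α, S.card = r - 1 → (∃ e ∈ H', S ⊆ e) →
      t ≤ (H'.filter (S ⊆ ·)).card)
    (hne : H'.Nonempty) :
    ∀ es : List (Finset β), TightSeq r es → es.length ≤ t →
      ∃ f : β → α, Set.InjOn f ↑(Vtx es) ∧ ∀ e ∈ es, e.image f ∈ H' := by
  intro es
  induction es with
  | nil => intro h; exact h.elim
  | cons e rest ih =>
    cases rest with
    | nil =>
      intro hts _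
      obtain ⟨h₀, hh₀⟩ := hne
      have hts' : e.card = r := hts
      have hec : e.card = h₀.card := by rw [hts', hu h₀ hh₀]
      obtain ⟨a₀, _⟩ := Finset.card_pos.1 (by rw [hu h₀ hh₀]; omega : 0 < h₀.card)
      let eq := Finset.equivOfCardEq hec
      refine ⟨fun b => if hb : b ∈ e then (eq ⟨b, hb⟩ : α) else a₀, ?_, ?_⟩
      · intro x hx y hy hxy
        simp only [Vtx_cons, Vtx_nil, Finset.union_empty, Finset.coe_union,
          Finset.mem_coe] at hx hy
        have hx' : x ∈ e := by simpa using hx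
        have hy' : y ∈ e := by simpa using hy
        simp only [dif_pos hx', dif_pos hy'] at hxy
        have := eq.injective (Subtype.ext hxy)
        exact congrArg Subtype.val this
      · intro e' he'
        have : e' = e := by simpa using he'
        subst this
        have hsub : e'.image (fun b => if hb : b ∈ e' then (eq ⟨b, hb⟩ : α) else a₀) ⊆ h₀ := by
          intro x hx
          obtain ⟨b, hb, hbx⟩ := Finset.mem_image.1 hx
          rw [dif_pos hb] at hbx
          exact hbx ▸ (eq ⟨b, hb⟩).2
        have hcardim : (e'.image (fun b => if hb : b ∈ e' then (eq ⟨b, hb⟩ : α) else a₀)).card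
            = h₀.card := by
          rw [Finset.card_image_of_injOn, hec]
          intro x hx y hy hxy
          have hx' : x ∈ e' := Finset.mem_coe.1 hx
          have hy' : y ∈ e' := Finset.mem_coe.1 hy
          simp only [dif_pos hx', dif_pos hy'] at hxy
          exact congrArg Subtype.val (eq.injective (Subtype.ext hxy))
        rw [Finset.eq_of_subset_of_card_le hsub (le_of_eq hcardim.symm)]
        exact hh₀
    | cons f0 rest' =>
      intro hts hlen
      obtain ⟨hc, ⟨v, hv, hvn, g, hg, hsub⟩, hts'⟩ := hts
      obtain ⟨f, hinj, hmaps⟩ := ih hts' (by simp at hlen ⊢; omega)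
      set W := Vtx (f0 :: rest') with hWdef
      have heW : e \ {v} ⊆ W := hsub.trans (subset_Vtx hg)
      have hVins : Vtx (e :: f0 :: rest') = insert v W := by
        rw [Vtx_cons]; exact union_eq_insert hv heW
      set Used := W.image f with hUdef
      have hUsedcard : Used.card = W.card := Finset.card_image_of_injOn hinj
      set S'' := (e \ {v}).image f with hSdef
      have hSsub : S'' ⊆ g.image f := Finset.image_subset_image hsub
      have hScard : S''.card = r - 1 := by
        rw [Finset.card_image_of_injOn (hinj.mono (by exact_mod_cast heW)),
          Finset.card_sdiff_of_subset (Finset.singleton_subset_iff.2 hv), hc, Finset.card_singleton]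
      have hSUsed : S'' ⊆ Used := Finset.image_subset_image heW
      have hdeg : t ≤ (H'.filter (S'' ⊆ ·)).card :=
        good S'' hScard ⟨g.image f, hmaps g hg, hSsub⟩
      set cand := H'.filter (S'' ⊆ ·) with hcanddef
      have hcandinj : Set.InjOn (· \ S'') ↑cand := by
        intro h1 h1m h2 h2m h12
        have h12' : h1 \ S'' = h2 \ S'' := h12
        have e1 : h1 = h1 \ S'' ∪ S'' :=
          (Finset.sdiff_union_of_subset (Finset.mem_filter.1 (Finset.mem_coe.1 h1m)).2).symm
        have e2 : h2 = h2 \ S'' ∪ S'' :=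
          (Finset.sdiff_union_of_subset (Finset.mem_filter.1 (Finset.mem_coe.1 h2m)).2).symm
        calc h1 = h1 \ S'' ∪ S'' := e1
          _ = h2 \ S'' ∪ S'' := by rw [h12']
          _ = h2 := e2.symm
      set B := cand.image (· \ S'') with hBdef
      have hBcard : B.card = cand.card := Finset.card_image_of_injOn hcandinj
      set Forb := (Used \ S'').image (fun u => ({u} : Finset α)) with hFdef
      have hWc : W.card ≤ r - 1 + (f0 :: rest').length := tightSeq_vtx_card hr hts'
      have hForb : Forb.card < t := by
        have h1 : Forb.card ≤ (Used \ S'').card := Finset.card_image_le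
        have h2 : (Used \ S'').card = Used.card - (r - 1) := by
          rw [Finset.card_sdiff_of_subset hSUsed, hScard]
        have hlen' : (f0 :: rest').length + 1 ≤ t := by simpa using hlen
        omega
      have hBex : ∃ b ∈ B, b ∉ Forb := by
        by_contra hcon
        push_neg at hcon
        have : B.card ≤ Forb.card := Finset.card_le_card hcon
        omega
      obtain ⟨b, hbB, hbF⟩ := hBex
      obtain ⟨h₁, hh₁, hb⟩ := Finset.mem_image.1 hbB
      have hh₁H : h₁ ∈ H' := (Finset.mem_filter.1 hh₁).1
      have hSh₁ : S'' ⊆ h₁ := (Finset.mem_filter.1 hh₁).2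
      have hbcard : b.card = 1 := by
        rw [← hb, Finset.card_sdiff_of_subset hSh₁, hu h₁ hh₁H, hScard]; omega
      obtain ⟨x, hx⟩ := Finset.card_eq_one.1 hbcard
      have hxS : x ∉ S'' := by
        have : x ∈ h₁ \ S'' := by rw [hb, hx]; exact Finset.mem_singleton_self x
        exact (Finset.mem_sdiff.1 this).2
      have hxU : x ∉ Used := by
        intro hxu
        exact hbF (by
          rw [hx] at *
          exact Finset.mem_image.2 ⟨x, Finset.mem_sdiff.2 ⟨hxu, hxS⟩, rfl⟩)
      have hh₁eq : h₁ = insert x S'' := by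
        have := Finset.sdiff_union_of_subset hSh₁
        rw [hb, hx] at this
        rw [← this, Finset.insert_eq]
      refine ⟨fun w => if w = v then x else f w, ?_, ?_⟩
      · rw [hVins]
        have hvW : v ∉ W := hvn
        intro a ha b' hb' hab
        simp only [Finset.coe_insert, Set.mem_insert_iff, Finset.mem_coe] at ha hb'
        have hab' : (if a = v then x else f a) = (if b' = v then x else f b') := hab
        by_cases hav : a = v <;> by_cases hbv : b' = v
        · rw [hav, hbv]
        · exfalso
          have hb'W : b' ∈ W := hb'.resolve_left hbv
          rw [if_pos hav, if_neg hbv] at hab'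
          exact hxU (hab' ▸ Finset.mem_image_of_mem f hb'W)
        · exfalso
          have haW : a ∈ W := ha.resolve_left hav
          rw [if_pos hbv, if_neg hav] at hab'
          exact hxU (hab'.symm ▸ Finset.mem_image_of_mem f haW)
        · rw [if_neg hav, if_neg hbv] at hab'
          exact hinj (Finset.mem_coe.2 (ha.resolve_left hav))
            (Finset.mem_coe.2 (hb'.resolve_left hbv)) hab' 
      · intro e' he'
        rcases List.mem_cons.1 he' with rfl | he'
        · have heins : e' = insert v (e' \ {v}) := by
            rw [Finset.insert_eq, Finset.union_sdiff_of_subset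
              (Finset.singleton_subset_iff.2 hv)]
          have himg : e'.image (fun w => if w = v then x else f w) = insert x S'' := by
            conv_lhs => rw [heins]
            rw [Finset.image_insert, if_pos rfl]
            congr 1
            rw [hSdef]
            apply Finset.image_congr
            intro w hw
            have hwv : w ≠ v := by
              intro h
              exact (Finset.mem_sdiff.1 (Finset.mem_coe.1 hw)).2 (h ▸ Finset.mem_singleton_self v)
            simp [hwv]
          rw [himg, ← hh₁eq]
          exact hh₁H
        · have : e'.image (fun w => if w = v then x else f w) = e'.image f := by
            apply Finset.image_congr
            intro w hw
            have hwW : w ∈ W := subset_Vtx he' hw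
            have : w ≠ v := fun h => hvn (h ▸ hwW)
            simp [this]
          rw [this]
          exact hmaps e' he'

end Aux

/-- **Greedy bound.** Let `r ≥ 2` and let `H` be an `r`-uniform hypergraph on
`n` vertices with more than `(t-1)·C(n, r-1)` edges. Then `H` contains every
tight `r`-tree with `t` edges. -/
theorem kalai_weak_bound {α : Type} [DecidableEq α] [Fintype α] (r t n : ℕ) (hr : 2 ≤ r)
    (hn : Fintype.card α = n)
    (H : Finset (Finset α)) (hunif : ∀ e ∈ H, e.card = r)
    (hcard : ((t : ℝ) - 1) * (n.choose (r - 1)) < H.card) :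
    ∀ (β : Type) [DecidableEq β] (T : Finset (Finset β)),
      IsTightTree r T → T.card = t → HContains H T := by
  intro β _ T hT hTt
  obtain ⟨es, hts, hesT⟩ := hT
  have hesne : es ≠ [] := by
    intro h; rw [h] at hts; exact hts.elim
  have hnodup : es.Nodup := tightSeq_nodup hts
  have hlen : es.length = t := by
    rw [← hTt, ← hesT, List.toFinset_card_of_nodup hnodup]
  have ht1 : 1 ≤ t := by
    rw [← hlen]
    exact List.length_pos_iff.2 hesne
  -- convert the real bound to a natural-number bound
  have hC : (t - 1) * (n.choose (r - 1)) < H.card := by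
    have : (((t - 1) * (n.choose (r - 1)) : ℕ) : ℝ) < (H.card : ℝ) := by
      push_cast [Nat.cast_sub ht1]
      exact_mod_cast hcard
    exact_mod_cast this
  -- clean the host hypergraph
  obtain ⟨H', hsub, hgood, hbound⟩ :=
    clean r t ((Finset.univ : Finset α).powersetCard (r - 1)) H
      (fun e he S hS hScard =>
        Finset.mem_powersetCard.2 ⟨Finset.subset_univ S, hScard⟩)
  have h𝒮card : ((Finset.univ : Finset α).powersetCard (r - 1)).card = n.choose (r - 1) := by
    rw [Finset.card_powersetCard, Finset.card_univ, hn]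
  rw [h𝒮card] at hbound
  have hne : H'.Nonempty := by
    rw [← Finset.card_pos]
    omega
  obtain ⟨f, hinj, hmaps⟩ :=
    greedy r t (by omega) H' (fun e he => hunif e (hsub he)) hgood hne es hts (le_of_eq hlen)
  refine ⟨f, ?_, ?_⟩
  · rw [← hesT, sup_toFinset]
    exact hinj
  · intro e he
    rw [← hesT, List.mem_toFinset] at he
    exact hsub (hmaps e he)
end

section
/- Let t be an odd natural number and let G be a graph on n vertices with more than (1 - 1/(t+1))·(t-1)·n edges. Then G contains (as a subgraph) every tree T having t edges. -/
open Finset SimpleGraph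

section Degrees

variable {V : Type} [Fintype V] [DecidableEq V] (G : SimpleGraph V) [DecidableRel G.Adj]

/-- degree of `v` towards the set `s`. -/
def degS (s : Finset V) (v : V) : ℕ := (s.filter (G.Adj v)).card

/-- sum of degrees within `s` (twice the number of edges inside `s`). -/
def DS (s : Finset V) : ℕ := ∑ v ∈ s, degS G s v

lemma DS_erase {s : Finset V} {v : V} (hv : v ∈ s) :
    DS G (s.erase v) + 2 * degS G s v = DS G s := by
  classical
  have hsplit : DS G s = degS G s v + ∑ u ∈ s.erase v, degS G s u := by
    rw [DS, ← Finset.add_sum_erase _ _ hv]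
  have hterm : ∀ u ∈ s.erase v,
      degS G s u = degS G (s.erase v) u + (if G.Adj u v then 1 else 0) := by
    intro u hu
    have hins : s = insert v (s.erase v) := (Finset.insert_erase hv).symm
    rw [degS, degS]
    conv_lhs => rw [hins]
    rw [Finset.filter_insert]
    by_cases h : G.Adj u v
    · rw [if_pos h, if_pos h, Finset.card_insert_of_notMem (by simp)]
    · rw [if_neg h, if_neg h, add_zero]
  have hsum2 : ∑ u ∈ s.erase v, degS G s u
      = DS G (s.erase v) + ∑ u ∈ s.erase v, (if G.Adj u v then 1 else 0) := by
    rw [DS, ← Finset.sum_add_distrib]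
    exact Finset.sum_congr rfl hterm
  have hcnt : ∑ u ∈ s.erase v, (if G.Adj u v then 1 else 0)
      = degS G s v := by
    rw [← Finset.card_filter]
    have h1 : (s.erase v).filter (fun u => G.Adj u v) = s.filter (G.Adj v) := by
      ext u
      simp only [Finset.mem_filter, Finset.mem_erase]
      constructor
      · rintro ⟨⟨-, hu⟩, h⟩; exact ⟨hu, G.adj_symm h⟩
      · rintro ⟨hu, h⟩; exact ⟨⟨h.ne', hu⟩, G.adj_symm h⟩
    rw [h1, degS]
  rw [hsplit, hsum2, hcnt]
  ring

lemma extract (t : ℕ) (ht1 : 1 ≤ t) :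
    ∀ s : Finset V, 2 * (1 - 1 / ((t : ℝ) + 1)) * ((t : ℝ) - 1) * s.card < DS G s →
    ∃ s' : Finset V, (∀ v ∈ s', t - 1 ≤ degS G s' v) ∧ ∃ v0 ∈ s', t ≤ degS G s' v0 := by
  classical
  set C : ℝ := 2 * (1 - 1 / ((t : ℝ) + 1)) * ((t : ℝ) - 1) with hCdef
  have htpos : (0:ℝ) < (t:ℝ) + 1 := by positivity
  have ht1R : (1:ℝ) ≤ (t:ℝ) := by exact_mod_cast ht1
  have hfrac : (1 - 1 / ((t : ℝ) + 1)) = (t:ℝ) / ((t:ℝ)+1) := by field_simp; ring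
  have hC1 : ((t:ℝ) - 1) ≤ C := by
    rw [hCdef, hfrac]
    rw [show 2 * ((t:ℝ) / ((t:ℝ)+1)) * ((t:ℝ)-1) = 2 * (t:ℝ) * ((t:ℝ)-1) / ((t:ℝ)+1) by ring]
    rw [le_div_iff₀ htpos]
    nlinarith
  have hC0 : (0:ℝ) ≤ C := le_trans (by linarith) hC1
  intro s
  induction s using Finset.strongInduction with
  | _ s ih =>
    intro hs
    by_cases hex : ∃ v ∈ s, degS G s v + 2 ≤ t
    · obtain ⟨v, hvs, hvd⟩ := hex
      have ht2 : 2 ≤ t := le_trans (by omega) hvd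
      have ht2R : (2:ℝ) ≤ (t:ℝ) := by exact_mod_cast ht2
      have hC2 : 2 * ((t:ℝ) - 2) ≤ C := by
        rw [hCdef, hfrac]
        rw [show 2 * ((t:ℝ) / ((t:ℝ)+1)) * ((t:ℝ)-1) = 2 * (t:ℝ) * ((t:ℝ)-1) / ((t:ℝ)+1) by ring]
        rw [le_div_iff₀ htpos]
        nlinarith
      have hdR : (degS G s v : ℝ) ≤ (t:ℝ) - 2 := by
        have : (degS G s v : ℝ) + 2 ≤ (t:ℝ) := by exact_mod_cast hvd
        linarith
      have herase := DS_erase G hvs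
      have hDSe : (DS G (s.erase v) : ℝ) = (DS G s : ℝ) - 2 * (degS G s v : ℝ) := by
        have : ((DS G (s.erase v) + 2 * degS G s v : ℕ) : ℝ) = (DS G s : ℝ) := by
          rw [herase]
        push_cast at this
        linarith
      have hcard : ((s.erase v).card : ℝ) = (s.card : ℝ) - 1 := by
        rw [Finset.card_erase_of_mem hvs]
        have : 1 ≤ s.card := Finset.card_pos.mpr ⟨v, hvs⟩
        push_cast [Nat.cast_sub this]
        ring
      have hnew : C * ((s.erase v).card : ℝ) < DS G (s.erase v) := by
        rw [hDSe, hcard]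
        nlinarith
      exact ih (s.erase v) (Finset.erase_ssubset hvs) hnew
    · push_neg at hex
      have hmin : ∀ v ∈ s, t - 1 ≤ degS G s v := by
        intro v hv
        have := hex v hv
        omega
      refine ⟨s, hmin, ?_⟩
      by_contra hc
      push_neg at hc
      have hle : ∀ v ∈ s, degS G s v ≤ t - 1 := by
        intro v hv
        have := hc v hv
        omega
      have hDSle : DS G s ≤ s.card * (t - 1) := by
        rw [DS]
        calc ∑ v ∈ s, degS G s v ≤ ∑ _v ∈ s, (t-1) := Finset.sum_le_sum hle
        _ = s.card * (t-1) := by rw [Finset.sum_const, smul_eq_mul]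
      have hcast : ((t - 1 : ℕ) : ℝ) = (t:ℝ) - 1 := by
        push_cast [Nat.cast_sub ht1]
        ring
      have hDSleR : (DS G s : ℝ) ≤ (s.card : ℝ) * ((t:ℝ) - 1) := by
        calc (DS G s : ℝ) ≤ ((s.card * (t-1) : ℕ) : ℝ) := by exact_mod_cast hDSle
        _ = (s.card : ℝ) * ((t:ℝ) - 1) := by push_cast [hcast]; ring
      have hcard0 : (0:ℝ) ≤ (s.card : ℝ) := by positivity
      nlinarith
end Degrees

section TreeTools

variable {W : Type} [Fintype W] [DecidableEq W] (T : SimpleGraph W) [DecidableRel T.Adj]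

lemma degree_pos_of_connected (hconn : T.Connected) (h2 : 2 ≤ Fintype.card W) (v : W) :
    0 < T.degree v := by
  obtain ⟨u, hu⟩ := Fintype.exists_ne_of_one_lt_card (by omega) v
  obtain ⟨q⟩ := hconn.preconnected v u
  rw [T.degree_pos_iff_exists_adj]
  cases q with
  | nil => exact absurd rfl (Ne.symm hu)
  | cons h _ => exact ⟨_, h⟩

lemma exists_leaf (hT : T.IsTree) (t : ℕ) (ht1 : 1 ≤ t)
    (hcard : Fintype.card W = t + 1) (hedges : T.edgeFinset.card = t) :
    ∃ ℓ : W, T.degree ℓ = 1 := by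
  by_contra hc
  push_neg at hc
  have h2 : 2 ≤ Fintype.card W := by omega
  have hge : ∀ v : W, 2 ≤ T.degree v := by
    intro v
    have h1 := degree_pos_of_connected T hT.isConnected h2 v
    have := hc v
    omega
  have hsum : ∑ v, T.degree v = 2 * t := by
    rw [T.sum_degrees_eq_twice_card_edges, hedges]
  have : 2 * (t+1) ≤ ∑ v, T.degree v := by
    calc 2 * (t+1) = ∑ _v : W, 2 := by
          rw [Finset.sum_const, smul_eq_mul, Finset.card_univ, hcard]; ring
    _ ≤ ∑ v, T.degree v := Finset.sum_le_sum (fun v _ => hge v)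
  omega

/-- a path avoiding a leaf `ℓ` distinct from both endpoints. -/
lemma path_avoids_leaf {ℓ : W} (hdeg : T.degree ℓ = 1) :
    ∀ {a b : W} (q : T.Walk a b), q.IsPath → a ≠ ℓ → b ≠ ℓ → ℓ ∉ q.support := by
  intro a b q
  induction q with
  | nil =>
    intro _ ha _
    simp [Ne.symm ha]
  | @cons a c b h q' ih =>
    intro hp ha hb
    rw [SimpleGraph.Walk.cons_isPath_iff] at hp
    rw [SimpleGraph.Walk.support_cons]
    simp only [List.mem_cons]
    rintro (rfl | hmem)
    · exact ha rfl
    · by_cases hcl : c = ℓ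
      · subst hcl
        -- ℓ = c is interior: has two distinct neighbors a and the next one
        cases q' with
        | nil => exact hb rfl
        | @cons _ e _ h2 q'' =>
          have hane : a ≠ e := by
            intro hae
            apply hp.2
            rw [SimpleGraph.Walk.support_cons, hae]
            exact List.mem_cons_of_mem _ q''.start_mem_support
          have hsub : ({a, e} : Finset W) ⊆ T.neighborFinset c := by
            intro x hx
            simp only [Finset.mem_insert, Finset.mem_singleton] at hx
            rcases hx with rfl | rfl
            · exact (T.mem_neighborFinset c x).mpr h.symm
            · exact (T.mem_neighborFinset c x).mpr h2
          have h2le : 2 ≤ T.degree c := by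
            have := Finset.card_le_card hsub
            rwa [Finset.card_insert_of_notMem (by simpa using hane),
              Finset.card_singleton] at this
          omega
      · exact ih hp.1 hcl hb hmem

/-- first crossing edge of a walk leaving a set. -/
lemma exists_crossing {A : Finset W} :
    ∀ {a b : W} (q : T.Walk a b), a ∈ A → b ∉ A →
    ∃ x ∈ A, ∃ y, y ∉ A ∧ y ∈ q.support ∧ T.Adj x y := by
  intro a b q
  induction q with
  | nil => intro ha hb; exact absurd ha hb
  | @cons a c b h q' ih =>
    intro ha hb
    by_cases hcA : c ∈ A
    · obtain ⟨x, hx, y, hy, hys, hxy⟩ := ih hcA hb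
      refine ⟨x, hx, y, hy, ?_, hxy⟩
      rw [SimpleGraph.Walk.support_cons]
      exact List.mem_cons_of_mem _ hys
    · refine ⟨a, ha, c, hcA, ?_, h⟩
      rw [SimpleGraph.Walk.support_cons]
      exact List.mem_cons_of_mem _ q'.start_mem_support

/-- enumerate a "connected" finset starting from `p` so that every vertex is adjacent to
an earlier vertex. -/
lemma exists_enum (S : Finset W) (p : W) (hp : p ∈ S)
    (hS : ∀ u ∈ S, ∃ q : T.Walk p u, ∀ x ∈ q.support, x ∈ S) :
    ∃ L : List W, L.Nodup ∧ L.toFinset = S ∧ L.head? = some p ∧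
      ∀ j, 0 < j → j < L.length →
        ∃ x ∈ (L.take j).toFinset, T.Adj (L.getD j p) x := by
  classical
  suffices H : ∀ k (L : List W), L.Nodup → L.toFinset ⊆ S → L.head? = some p →
      (∀ j, 0 < j → j < L.length → ∃ x ∈ (L.take j).toFinset, T.Adj (L.getD j p) x) →
      S.card = L.length + k →
      ∃ L' : List W, L'.Nodup ∧ L'.toFinset = S ∧ L'.head? = some p ∧
        ∀ j, 0 < j → j < L'.length → ∃ x ∈ (L'.take j).toFinset, T.Adj (L'.getD j p) x by
    have hcard : 1 ≤ S.card := Finset.card_pos.mpr ⟨p, hp⟩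
    refine H (S.card - 1) [p] (by simp) (by simpa using hp) rfl ?_ (by simp; omega)
    intro j hj hj2
    simp at hj2
    omega
  intro k
  induction k with
  | zero =>
    intro L hnd hsub hhead h1 hcard
    refine ⟨L, hnd, ?_, hhead, h1⟩
    apply Finset.eq_of_subset_of_card_le hsub
    rw [List.toFinset_card_of_nodup hnd]
    omega
  | succ k ihk =>
    intro L hnd hsub hhead h1 hcard
    have hne : L.toFinset ≠ S := by
      intro hEq
      have := List.toFinset_card_of_nodup hnd
      rw [hEq] at this
      omega
    obtain ⟨u, huS, huL⟩ : ∃ u ∈ S, u ∉ L.toFinset := by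
      by_contra hcon
      push_neg at hcon
      exact hne (Finset.Subset.antisymm hsub hcon)
    obtain ⟨q, hq⟩ := hS u huS
    have hpL : p ∈ L.toFinset := by
      cases L with
      | nil => simp at hhead
      | cons a L' =>
        simp only [List.head?_cons, Option.some_inj] at hhead
        subst hhead
        simp
    obtain ⟨x, hxL, y, hyL, hysupp, hxy⟩ := exists_crossing T q hpL huL
    have hyS : y ∈ S := hq y hysupp
    have hLne : L ≠ [] := by
      intro hLnil
      rw [hLnil] at hhead
      simp at hhead
    refine ihk (L ++ [y]) ?_ ?_ ?_ ?_ ?_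
    · rw [List.nodup_append]
      refine ⟨hnd, List.nodup_singleton y, ?_⟩
      intro a haL b hb hab
      simp only [List.mem_singleton] at hb
      subst hb; subst hab
      exact hyL (List.mem_toFinset.mpr haL)
    · rw [List.toFinset_append]
      simp only [List.toFinset_cons, List.toFinset_nil, insert_empty_eq]
      exact Finset.union_subset hsub (by simpa using hyS)
    · cases L with
      | nil => exact absurd rfl hLne
      | cons a L' => simpa using hhead
    · intro j hj hjlen
      rw [List.length_append, List.length_singleton] at hjlen
      by_cases hjL : j < L.length
      · rw [List.getD_append _ _ _ _ hjL, List.take_append_of_le_length (le_of_lt hjL)]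
        exact h1 j hj hjL
      · have hjeq : j = L.length := by omega
        subst hjeq
        rw [List.getD_append_right _ _ _ _ (le_refl _), Nat.sub_self]
        simp only [List.getD_cons_zero]
        rw [List.take_left]
        exact ⟨x, hxL, hxy.symm⟩
    · rw [List.length_append, List.length_singleton]
      omega

end TreeTools

section Counting

variable {W : Type} [Fintype W] [DecidableEq W] (T : SimpleGraph W) [DecidableRel T.Adj]

open Classical in
/-- the number of edges of `T` inside `S`. -/
noncomputable def eIn (S : Finset W) : ℕ :=
  (T.edgeFinset.filter (fun e => ∀ x ∈ e, x ∈ S)).card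

open Classical in
lemma eIn_empty : eIn T (∅ : Finset W) = 0 := by
  rw [eIn, Finset.card_eq_zero, Finset.filter_eq_empty_iff]
  intro e he
  induction e with
  | _ a b =>
    intro hall
    simpa using hall a (by simp)

open Classical in
lemma eIn_insert {S : Finset W} {w : W} (hw : w ∉ S) :
    eIn T (insert w S) = eIn T S + (S.filter (T.Adj w)).card := by
  classical
  have hunion : T.edgeFinset.filter (fun e => ∀ x ∈ e, x ∈ insert w S)
      = (T.edgeFinset.filter (fun e => ∀ x ∈ e, x ∈ S)) ∪
        (T.edgeFinset.filter (fun e => w ∈ e ∧ ∀ x ∈ e, x ∈ insert w S)) := by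
    ext e
    simp only [Finset.mem_union, Finset.mem_filter]
    constructor
    · rintro ⟨he, hall⟩
      by_cases hwe : w ∈ e
      · exact Or.inr ⟨he, hwe, hall⟩
      · refine Or.inl ⟨he, fun x hx => ?_⟩
        have := hall x hx
        rw [Finset.mem_insert] at this
        rcases this with rfl | h
        · exact absurd hx hwe
        · exact h
    · rintro (⟨he, hall⟩ | ⟨he, _, hall⟩)
      · exact ⟨he, fun x hx => Finset.mem_insert_of_mem (hall x hx)⟩
      · exact ⟨he, hall⟩
  have hdisj : Disjoint (T.edgeFinset.filter (fun e => ∀ x ∈ e, x ∈ S))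
      (T.edgeFinset.filter (fun e => w ∈ e ∧ ∀ x ∈ e, x ∈ insert w S)) := by
    rw [Finset.disjoint_left]
    intro e he1 he2
    rw [Finset.mem_filter] at he1 he2
    exact hw (he1.2 w he2.2.1)
  have hcard2 : (T.edgeFinset.filter (fun e => w ∈ e ∧ ∀ x ∈ e, x ∈ insert w S)).card
      = (S.filter (T.Adj w)).card := by
    apply Finset.card_bij (fun e he => Sym2.Mem.other (Finset.mem_filter.mp he).2.1)
    · intro e he
      have hmem := Finset.mem_filter.mp he
      have hedge : e ∈ T.edgeSet := SimpleGraph.mem_edgeFinset.mp hmem.1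
      have hspec := Sym2.other_spec hmem.2.1
      have hadj : T.Adj w (Sym2.Mem.other hmem.2.1) := by
        rw [← SimpleGraph.mem_edgeSet, hspec]
        exact hedge
      rw [Finset.mem_filter]
      refine ⟨?_, hadj⟩
      have hothermem : Sym2.Mem.other hmem.2.1 ∈ e := Sym2.other_mem hmem.2.1
      have := hmem.2.2 _ hothermem
      rw [Finset.mem_insert] at this
      rcases this with heq | h
      · exact absurd heq.symm hadj.ne
      · exact h
    · intro e1 he1 e2 he2 heq
      have h1 := Sym2.other_spec (Finset.mem_filter.mp he1).2.1
      have h2 := Sym2.other_spec (Finset.mem_filter.mp he2).2.1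
      rw [← h1, ← h2, heq]
    · intro y hy
      rw [Finset.mem_filter] at hy
      have hadj : T.Adj w y := hy.2
      have hedge : s(w, y) ∈ T.edgeFinset := SimpleGraph.mem_edgeFinset.mpr hadj
      have hwmem : w ∈ s(w, y) := by simp
      refine ⟨s(w, y), Finset.mem_filter.mpr ⟨hedge, hwmem, ?_⟩, ?_⟩
      · intro x hx
        rw [Sym2.mem_iff] at hx
        rcases hx with rfl | rfl
        · exact Finset.mem_insert_self _ _
        · exact Finset.mem_insert_of_mem hy.1
      · -- other of w ∈ s(w,y) is y
        have := Sym2.other_spec (Finset.mem_filter.mp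
          (Finset.mem_filter.mpr ⟨hedge, hwmem, fun x hx => by
            rw [Sym2.mem_iff] at hx
            rcases hx with rfl | rfl
            · exact Finset.mem_insert_self _ _
            · exact Finset.mem_insert_of_mem hy.1⟩ :
              s(w,y) ∈ T.edgeFinset.filter (fun e => w ∈ e ∧ ∀ x ∈ e, x ∈ insert w S))).2.1
        exact (Sym2.congr_right.mp this)
  rw [eIn, eIn, hunion, Finset.card_union_of_disjoint hdisj, hcard2]

open Classical in
lemma eIn_univ : eIn T (Finset.univ : Finset W) = T.edgeFinset.card := by
  rw [eIn]
  congr 1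
  apply Finset.filter_true_of_mem
  intro e _
  intro x _
  exact Finset.mem_univ x

open Classical in
lemma sum_take (d : W) (L : List W) (hnd : L.Nodup) :
    ∑ j ∈ Finset.range L.length,
      ((L.take j).toFinset.filter (T.Adj (L.getD j d))).card = eIn T L.toFinset := by
  induction L using List.reverseRecOn with
  | nil => simp [eIn_empty]
  | append_singleton L₀ w ih =>
    rw [List.nodup_append] at hnd
    obtain ⟨hnd₀, -, hdisj⟩ := hnd
    have hwL₀ : w ∉ L₀.toFinset := by
      intro hmem
      exact hdisj w (List.mem_toFinset.mp hmem) w (List.mem_singleton_self w) rfl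
    rw [List.length_append, List.length_singleton, Finset.sum_range_succ]
    have hstep : ∀ j ∈ Finset.range L₀.length,
        (((L₀ ++ [w]).take j).toFinset.filter (T.Adj ((L₀ ++ [w]).getD j d))).card
        = ((L₀.take j).toFinset.filter (T.Adj (L₀.getD j d))).card := by
      intro j hj
      rw [Finset.mem_range] at hj
      rw [List.getD_append _ _ _ _ hj, List.take_append_of_le_length (le_of_lt hj)]
    rw [Finset.sum_congr rfl hstep, ih hnd₀]
    rw [List.getD_append_right _ _ _ _ (le_refl _), Nat.sub_self]
    simp only [List.getD_cons_zero]
    rw [List.take_left]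
    have htof : (L₀ ++ [w]).toFinset = insert w L₀.toFinset := by
      rw [List.toFinset_append]
      simp only [List.toFinset_cons, List.toFinset_nil, insert_empty_eq]
      rw [Finset.union_comm, ← Finset.insert_eq]
    rw [htof, eIn_insert T hwL₀]

lemma forced_ones {s : Finset ℕ} {c : ℕ → ℕ} (h1 : ∀ j ∈ s, 1 ≤ c j)
    (hsum : ∑ j ∈ s, c j = s.card) : ∀ j ∈ s, c j = 1 := by
  intro j hj
  by_contra hne
  have h2 : 2 ≤ c j := by
    have := h1 j hj
    omega
  have hlt : ∑ _j ∈ s, 1 < ∑ j ∈ s, c j :=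
    Finset.sum_lt_sum h1 ⟨j, hj, by omega⟩
  rw [Finset.sum_const, smul_eq_mul, mul_one] at hlt
  omega

end Counting

section Greedy

variable {V : Type} [Fintype V] [DecidableEq V] (G : SimpleGraph V) [DecidableRel G.Adj]
variable {W : Type} [Fintype W] [DecidableEq W] (T : SimpleGraph W) [DecidableRel T.Adj]

lemma greedy_s8 (t : ℕ) (ht1 : 1 ≤ t) (s' : Finset V)
    (hmin : ∀ v ∈ s', t - 1 ≤ degS G s' v) (v0 : V) (hv0s : v0 ∈ s')
    (hv0 : t ≤ degS G s' v0)
    (p ℓ : W) (L : List W) (hnd : L.Nodup) (huniv : L.toFinset = Finset.univ)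
    (hlen : L.length = t + 1)
    (hlast : ∃ L'', L = L'' ++ [ℓ]) (hheadp : L.head? = some p)
    (hnbl : ∀ y, T.Adj ℓ y → y = p)
    (HSPLIT : ∀ (P : List W) (w : W) (M : List W), P ++ w :: M = L → P ≠ [] →
      ∃ x ∈ P.toFinset, T.Adj w x ∧ ∀ y ∈ P.toFinset, T.Adj w y → y = x) :
    ∃ g : W → V, Function.Injective g ∧ ∀ a b, T.Adj a b → G.Adj (g a) (g b) := by
  classical
  suffices H : ∀ (M P : List W) (g : W → V), P ++ M = L →
      (∀ a ∈ P.toFinset, g a ∈ s') →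
      (∀ a ∈ P.toFinset, ∀ b ∈ P.toFinset, g a = g b → a = b) →
      (∀ a ∈ P.toFinset, ∀ b ∈ P.toFinset, T.Adj a b → G.Adj (g a) (g b)) →
      (P ≠ [] → p ∈ P.toFinset ∧ g p = v0) →
      ∃ g' : W → V, Function.Injective g' ∧ ∀ a b, T.Adj a b → G.Adj (g' a) (g' b) by
    exact H L [] (fun _ => v0) rfl (by simp) (by simp) (by simp) (by simp)
  intro M
  induction M with
  | nil =>
    intro P g hPL himg hinj hadj hhead
    rw [List.append_nil] at hPL
    subst hPL
    refine ⟨g, ?_, ?_⟩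
    · intro a b hab
      exact hinj a (by rw [huniv]; exact Finset.mem_univ a)
        b (by rw [huniv]; exact Finset.mem_univ b) hab
    · intro a b hab
      exact hadj a (by rw [huniv]; exact Finset.mem_univ a)
        b (by rw [huniv]; exact Finset.mem_univ b) hab
  | cons w M' ih =>
    intro P g hPL himg hinj hadj hhead
    have hwP : w ∉ P.toFinset := by
      intro hmem
      have : (P ++ w :: M').Nodup := hPL ▸ hnd
      rw [List.nodup_append] at this
      exact this.2.2 w (List.mem_toFinset.mp hmem) w List.mem_cons_self rfl
    by_cases hP : P = []
    · subst hP
      have hwp : w = p := by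
        rw [List.nil_append] at hPL
        rw [← hPL] at hheadp
        simpa using hheadp
      subst hwp
      refine ih [w] (Function.update g w v0) (by simpa using hPL) ?_ ?_ ?_ ?_
      · intro a ha
        simp only [List.toFinset_cons, List.toFinset_nil, insert_empty_eq,
          Finset.mem_singleton] at ha
        subst ha
        rw [Function.update_self]
        exact hv0s
      · intro a ha b hb _
        simp only [List.toFinset_cons, List.toFinset_nil, insert_empty_eq,
          Finset.mem_singleton] at ha hb
        rw [ha, hb]
      · intro a ha b hb habT
        simp only [List.toFinset_cons, List.toFinset_nil, insert_empty_eq,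
          Finset.mem_singleton] at ha hb
        subst ha; subst hb
        exact absurd habT (T.irrefl)
      · intro _
        constructor
        · simp
        · rw [Function.update_self]
    · obtain ⟨x, hxP, hxadj, hxuniq⟩ := HSPLIT P w M' hPL hP
      have hgx : g x ∈ s' := himg x hxP
      have hPcard : P.toFinset.card = P.length := by
        have : (P ++ w :: M').Nodup := hPL ▸ hnd
        rw [List.nodup_append] at this
        exact List.toFinset_card_of_nodup this.1
      have hlen2 : P.length + (M'.length + 1) = t + 1 := by
        have := congrArg List.length hPL
        rw [List.length_append, List.length_cons] at this
        omega
      have hdeg : P.toFinset.card ≤ degS G s' (g x) := by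
        by_cases hM' : M' = []
        · subst hM'
          have hPlen : P.length = t := by simp at hlen2; omega
          have hwl : w = ℓ := by
            obtain ⟨L'', hL''⟩ := hlast
            rw [hL''] at hPL
            have := List.append_inj' hPL (by simp)
            exact (List.cons.injEq _ _ _ _ ▸ this.2).1
          have hxp : x = p := by
            apply hnbl
            rw [← hwl]
            exact hxadj
          have hgxv0 : g x = v0 := by
            rw [hxp]
            exact (hhead hP).2
          rw [hgxv0, hPcard, hPlen]
          exact hv0
        · have hM'len : 1 ≤ M'.length := by
            cases M' with
            | nil => exact absurd rfl hM'
            | cons _ _ => simp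
          have hPle : P.length ≤ t - 1 := by omega
          calc P.toFinset.card = P.length := hPcard
          _ ≤ t - 1 := hPle
          _ ≤ degS G s' (g x) := hmin _ hgx
      -- find an unused neighbor
      set used := P.toFinset.image g with husse
      have husedcard : used.card ≤ P.toFinset.card := Finset.card_image_le
      have hgxused : g x ∈ used := Finset.mem_image_of_mem g hxP
      have hFnotsub : ¬ (s'.filter (G.Adj (g x)) ⊆ used) := by
        intro hsub
        have hsub2 : s'.filter (G.Adj (g x)) ⊆ used.erase (g x) := by
          intro u hu
          rw [Finset.mem_erase]
          refine ⟨?_, hsub hu⟩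
          have := (Finset.mem_filter.mp hu).2
          exact this.ne'
        have hcard := Finset.card_le_card hsub2
        rw [Finset.card_erase_of_mem hgxused] at hcard
        have h1 : 1 ≤ used.card := Finset.card_pos.mpr ⟨g x, hgxused⟩
        have : degS G s' (g x) ≤ used.card - 1 := hcard
        have hPpos : 1 ≤ P.toFinset.card := by
          rw [hPcard]
          cases P with
          | nil => exact absurd rfl hP
          | cons _ _ => simp
        omega
      obtain ⟨u, huF, huused⟩ := Finset.not_subset.mp hFnotsub
      have huS : u ∈ s' := (Finset.mem_filter.mp huF).1
      have huadj : G.Adj (g x) u := (Finset.mem_filter.mp huF).2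
      refine ih (P ++ [w]) (Function.update g w u) (by rw [List.append_assoc]; simpa using hPL)
        ?_ ?_ ?_ ?_
      · intro a ha
        rw [List.toFinset_append] at ha
        simp only [List.toFinset_cons, List.toFinset_nil, insert_empty_eq,
          Finset.mem_union, Finset.mem_singleton] at ha
        rcases ha with ha | rfl
        · rw [Function.update_of_ne (by rintro rfl; exact hwP ha)]
          exact himg a ha
        · rw [Function.update_self]
          exact huS
      · intro a ha b hb hab
        rw [List.toFinset_append] at ha hb
        simp only [List.toFinset_cons, List.toFinset_nil, insert_empty_eq,
          Finset.mem_union, Finset.mem_singleton] at ha hb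
        rcases ha with ha | rfl <;> rcases hb with hb | rfl
        · rw [Function.update_of_ne (by rintro rfl; exact hwP ha),
            Function.update_of_ne (by rintro rfl; exact hwP hb)] at hab
          exact hinj a ha b hb hab
        · rw [Function.update_of_ne (by rintro rfl; exact hwP ha),
            Function.update_self] at hab
          exact absurd (hab ▸ Finset.mem_image_of_mem g ha) huused
        · rw [Function.update_self,
            Function.update_of_ne (by rintro rfl; exact hwP hb)] at hab
          exfalso
          apply huused
          rw [hab]
          exact Finset.mem_image_of_mem g hb
        · rfl
      · intro a ha b hb habT
        rw [List.toFinset_append] at ha hb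
        simp only [List.toFinset_cons, List.toFinset_nil, insert_empty_eq,
          Finset.mem_union, Finset.mem_singleton] at ha hb
        rcases ha with ha | rfl <;> rcases hb with hb | rfl
        · rw [Function.update_of_ne (by rintro rfl; exact hwP ha),
            Function.update_of_ne (by rintro rfl; exact hwP hb)]
          exact hadj a ha b hb habT
        · have hax : a = x := hxuniq a ha habT.symm
          rw [Function.update_of_ne (by rintro rfl; exact hwP ha), Function.update_self, hax]
          exact huadj
        · have hbx : b = x := hxuniq b hb habT
          rw [Function.update_self, Function.update_of_ne (by rintro rfl; exact hwP hb), hbx]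
          exact huadj.symm
        · exact absurd habT (T.irrefl)
      · intro _
        have hpP : p ∈ P.toFinset := (hhead hP).1
        constructor
        · rw [List.toFinset_append]
          exact Finset.mem_union_left _ hpP
        · rw [Function.update_of_ne (by rintro rfl; exact hwP hpP)]
          exact (hhead hP).2

end Greedy

/-- **Proposition (odd case).** Let `t` be an odd natural number and let `G`
be a graph on `n` vertices with more than `(1 - 1/(t+1))·(t-1)·n` edges. Then
`G` contains every tree with `t` edges. -/
theorem turan_trees_odd {V : Type} [Fintype V] [DecidableEq V] (t n : ℕ)
    (ht : Odd t) (G : SimpleGraph V) [DecidableRel G.Adj]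
    (hn : Fintype.card V = n)
    (hm : (1 - 1 / ((t : ℝ) + 1)) * ((t : ℝ) - 1) * n < G.edgeFinset.card) :
    ∀ (W : Type) [Fintype W] [DecidableEq W] (T : SimpleGraph W)
      [DecidableRel T.Adj], T.IsTree → T.edgeFinset.card = t →
      ∃ f : W ↪ V, ∀ a b, T.Adj a b → G.Adj (f a) (f b) := by
  classical
  intro W _ _ T _ hT hTcard
  have ht1 : 1 ≤ t := ht.pos
  -- Step 1: extraction
  have hDSuniv : DS G Finset.univ = 2 * G.edgeFinset.card := by
    rw [DS]
    have : ∀ v : V, degS G Finset.univ v = G.degree v := by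
      intro v
      rw [degS, ← neighborFinset_eq_filter, SimpleGraph.degree]
    rw [Finset.sum_congr rfl (fun v _ => this v)]
    exact G.sum_degrees_eq_twice_card_edges
  have hhyp : 2 * (1 - 1 / ((t : ℝ) + 1)) * ((t : ℝ) - 1) * (Finset.univ : Finset V).card
      < DS G Finset.univ := by
    rw [hDSuniv, Finset.card_univ, hn]
    push_cast
    nlinarith
  obtain ⟨s', hmin, v0, hv0s, hv0⟩ := extract G t ht1 Finset.univ hhyp
  -- Step 2: tree structure
  have hcardW : Fintype.card W = t + 1 := by
    rw [← hT.card_edgeFinset, hTcard]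
  obtain ⟨ℓ, hℓ⟩ := exists_leaf T hT t ht1 hcardW hTcard
  obtain ⟨p, hp⟩ := Finset.card_eq_one.mp (by rw [← SimpleGraph.degree]; exact hℓ :
    (T.neighborFinset ℓ).card = 1)
  have hadj_lp : T.Adj ℓ p := by
    have : p ∈ T.neighborFinset ℓ := by rw [hp]; exact Finset.mem_singleton_self p
    exact (T.mem_neighborFinset ℓ p).mp this
  have hnbl : ∀ y, T.Adj ℓ y → y = p := by
    intro y hy
    have : y ∈ T.neighborFinset ℓ := (T.mem_neighborFinset ℓ y).mpr hy
    rw [hp] at this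
    exact Finset.mem_singleton.mp this
  have hplne : p ≠ ℓ := hadj_lp.ne'
  -- Step 3: enumeration of W \ {ℓ}
  set S : Finset W := Finset.univ.erase ℓ with hSdef
  have hpS : p ∈ S := Finset.mem_erase.mpr ⟨hplne, Finset.mem_univ p⟩
  have hS : ∀ u ∈ S, ∃ q : T.Walk p u, ∀ x ∈ q.support, x ∈ S := by
    intro u huS
    have hune : u ≠ ℓ := (Finset.mem_erase.mp huS).1
    obtain ⟨q0⟩ := hT.isConnected.preconnected p u
    refine ⟨q0.toPath, ?_⟩
    intro x hx
    rw [hSdef, Finset.mem_erase]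
    refine ⟨?_, Finset.mem_univ x⟩
    intro hxl
    subst hxl
    exact path_avoids_leaf T hℓ q0.toPath (q0.toPath : T.Path p u).2 hplne hune hx
  obtain ⟨L₀, hL₀nd, hL₀tf, hL₀head, hL₀prop⟩ := exists_enum T S p hpS hS
  have hℓL₀ : ℓ ∉ L₀.toFinset := by
    rw [hL₀tf, hSdef]
    simp
  set L : List W := L₀ ++ [ℓ] with hLdef
  have hLnd : L.Nodup := by
    rw [hLdef, List.nodup_append]
    exact ⟨hL₀nd, List.nodup_singleton ℓ, fun a haL₀ b hb hab => by
      simp only [List.mem_singleton] at hb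
      subst hb; subst hab
      exact hℓL₀ (List.mem_toFinset.mpr haL₀)⟩
  have hLtf : L.toFinset = Finset.univ := by
    rw [hLdef, List.toFinset_append]
    simp only [List.toFinset_cons, List.toFinset_nil, insert_empty_eq]
    rw [hL₀tf, hSdef, Finset.union_comm]
    rw [← Finset.insert_eq]
    exact Finset.insert_erase (Finset.mem_univ ℓ)
  have hL₀len : L₀.length = t := by
    have h1 : L₀.toFinset.card = S.card := by rw [hL₀tf]
    rw [List.toFinset_card_of_nodup hL₀nd] at h1
    rw [hSdef, Finset.card_erase_of_mem (Finset.mem_univ ℓ), Finset.card_univ, hcardW] at h1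
    omega
  have hLlen : L.length = t + 1 := by
    rw [hLdef, List.length_append, List.length_singleton, hL₀len]
  have hLhead : L.head? = some p := by
    cases hL₀ : L₀ with
    | nil => rw [hL₀] at hL₀head; simp at hL₀head
    | cons a L' =>
      rw [hLdef, hL₀]
      rw [hL₀] at hL₀head
      simpa using hL₀head
  have hL₀ne : L₀ ≠ [] := by
    intro h
    rw [h] at hL₀len
    simp at hL₀len
    omega
  -- the "≥ 1 earlier neighbor" property for L
  have hLprop : ∀ j, 0 < j → j < L.length →
      ∃ x ∈ (L.take j).toFinset, T.Adj (L.getD j p) x := by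
    intro j hj hjlen
    rw [hLlen] at hjlen
    by_cases hjL₀ : j < L₀.length
    · rw [hLdef, List.getD_append _ _ _ _ hjL₀, List.take_append_of_le_length (le_of_lt hjL₀)]
      exact hL₀prop j hj hjL₀
    · have hjeq : j = L₀.length := by omega
      subst hjeq
      rw [hLdef, List.getD_append_right _ _ _ _ (le_refl _), Nat.sub_self]
      simp only [List.getD_cons_zero]
      rw [List.take_left]
      refine ⟨p, ?_, hadj_lp⟩
      cases hL₀c : L₀ with
      | nil => exact absurd hL₀c hL₀ne
      | cons a L' =>
        rw [hL₀c] at hL₀head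
        simp only [List.head?_cons, Option.some_inj] at hL₀head
        subst hL₀head
        simp
  -- Step 4: counting forces exactly one earlier neighbor
  have hsum := sum_take T p L hLnd
  rw [hLtf, eIn_univ, hTcard, hLlen] at hsum
  have hc0 : ((L.take 0).toFinset.filter (T.Adj (L.getD 0 p))).card = 0 := by simp
  have hsum' : ∑ j ∈ (Finset.range (t+1)).erase 0,
      ((L.take j).toFinset.filter (T.Adj (L.getD j p))).card = t := by
    have h := Finset.add_sum_erase (Finset.range (t+1))
      (fun j => ((L.take j).toFinset.filter (T.Adj (L.getD j p))).card)
      (show (0:ℕ) ∈ Finset.range (t+1) by simp)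
    simp only [hc0, zero_add] at h
    rw [h]
    exact hsum
  have hcarderase : ((Finset.range (t+1)).erase 0).card = t := by
    rw [Finset.card_erase_of_mem (show (0:ℕ) ∈ Finset.range (t+1) by simp), Finset.card_range]
    omega
  have hforced : ∀ j ∈ (Finset.range (t+1)).erase 0,
      ((L.take j).toFinset.filter (T.Adj (L.getD j p))).card = 1 := by
    apply forced_ones
    · intro j hj
      rw [Finset.mem_erase, Finset.mem_range] at hj
      obtain ⟨x, hx, hadjx⟩ := hLprop j (by omega) (by omega)
      rw [Nat.one_le_iff_ne_zero, ← Nat.pos_iff_ne_zero, Finset.card_pos]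
      exact ⟨x, Finset.mem_filter.mpr ⟨hx, hadjx⟩⟩
    · rw [hcarderase]
      exact hsum'
  have HSPLIT : ∀ (P : List W) (w : W) (M : List W), P ++ w :: M = L → P ≠ [] →
      ∃ x ∈ P.toFinset, T.Adj w x ∧ ∀ y ∈ P.toFinset, T.Adj w y → y = x := by
    intro P w M hsplit hPne
    have hj1 : 1 ≤ P.length := by
      cases P with
      | nil => exact absurd rfl hPne
      | cons _ _ => simp
    have hjt : P.length ≤ t := by
      have := congrArg List.length hsplit
      rw [List.length_append, List.length_cons, hLlen] at this
      omega
    have hjmem : P.length ∈ (Finset.range (t+1)).erase 0 := by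
      rw [Finset.mem_erase, Finset.mem_range]
      omega
    have hcval := hforced P.length hjmem
    have htake : L.take P.length = P := by
      rw [← hsplit, List.take_left]
    have hgetD : L.getD P.length p = w := by
      rw [← hsplit, List.getD_append_right _ _ _ _ (le_refl _), Nat.sub_self]
      simp
    rw [htake, hgetD] at hcval
    obtain ⟨x, hxeq⟩ := Finset.card_eq_one.mp hcval
    have hxmem : x ∈ P.toFinset.filter (T.Adj w) := by
      rw [hxeq]
      exact Finset.mem_singleton_self x
    rw [Finset.mem_filter] at hxmem
    refine ⟨x, hxmem.1, hxmem.2, ?_⟩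
    intro y hy hadjy
    have : y ∈ P.toFinset.filter (T.Adj w) := Finset.mem_filter.mpr ⟨hy, hadjy⟩
    rw [hxeq] at this
    exact Finset.mem_singleton.mp this
  -- Step 5: greedy embedding
  obtain ⟨g, hginj, hgadj⟩ := greedy_s8 G T t ht1 s' hmin v0 hv0s hv0 p ℓ L hLnd hLtf hLlen
    ⟨L₀, rfl⟩ hLhead hnbl HSPLIT
  exact ⟨⟨g, hginj⟩, fun a b hab => hgadj a b hab⟩
end

section
/- Let t be an even natural number and let G be a graph on n vertices with more than (1 - 1/t)·(t-1)·n edges. Then G contains (as a subgraph) every tree T having t edges. -/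
open Finset SimpleGraph

namespace TuranAux

variable {W : Type} [DecidableEq W] {T : SimpleGraph W}

lemma dist_lt_of_mem_support {u y x : W} (r : T.Walk u y) (hx : x ∈ r.support)
    (hxy : x ≠ y) : T.dist u x < r.length := by
  have hsplit := r.take_spec hx
  have hlen : (r.takeUntil x hx).length + (r.dropUntil x hx).length = r.length := by
    rw [← SimpleGraph.Walk.length_append, hsplit]
  have hdrop : (r.dropUntil x hx).length ≠ 0 := fun h0 =>
    hxy (SimpleGraph.Walk.eq_of_length_eq_zero h0)
  have htake := SimpleGraph.dist_le (r.takeUntil x hx)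
  omega

lemma exists_shortest_avoiding (hT : T.IsTree) (u x y : W) (hxy : x ≠ y)
    (hle : T.dist u y ≤ T.dist u x) :
    ∃ r : T.Walk y u, r.IsPath ∧ r.length = T.dist u y ∧ x ∉ r.support := by
  obtain ⟨w, hw⟩ := hT.isConnected.exists_walk_length_eq_dist u y
  have hbp : w.bypass.length = T.dist u y :=
    le_antisymm (hw ▸ SimpleGraph.Walk.length_bypass_le w) (SimpleGraph.dist_le _)
  refine ⟨w.bypass.reverse, (SimpleGraph.Walk.bypass_isPath w).reverse, by
    simpa using hbp, ?_⟩
  intro hmem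
  rw [SimpleGraph.Walk.support_reverse, List.mem_reverse] at hmem
  have := dist_lt_of_mem_support w.bypass hmem hxy
  omega

lemma no_two_low_neighbors (hT : T.IsTree) (u x y₁ y₂ : W)
    (h1 : T.Adj x y₁) (h2 : T.Adj x y₂) (hne : y₁ ≠ y₂)
    (d1 : T.dist u y₁ ≤ T.dist u x) (d2 : T.dist u y₂ ≤ T.dist u x) : False := by
  obtain ⟨r₁, hp1, _, hx1⟩ := exists_shortest_avoiding hT u x y₁ h1.ne d1
  obtain ⟨r₂, hp2, _, hx2⟩ := exists_shortest_avoiding hT u x y₂ h2.ne d2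
  set q₁ : T.Walk x u := SimpleGraph.Walk.cons h1 r₁ with hq1
  set q₂ : T.Walk x u := SimpleGraph.Walk.cons h2 r₂ with hq2
  have hq1p : q₁.IsPath := hp1.cons (hu := hx1) (h := h1)
  have hq2p : q₂.IsPath := hp2.cons (hu := hx2) (h := h2)
  obtain ⟨p, -, hup⟩ := hT.existsUnique_path x u
  have : q₁ = q₂ := (hup q₁ hq1p).trans (hup q₂ hq2p).symm
  have hsupp : q₁.support = q₂.support := by rw [this]
  rw [hq1, hq2, SimpleGraph.Walk.support_cons, SimpleGraph.Walk.support_cons,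
    r₁.support_eq_cons, r₂.support_eq_cons] at hsupp
  simp only [List.cons.injEq] at hsupp
  exact hne hsupp.2.1

lemma adj_dist_ne (hT : T.IsTree) (u x y : W) (h : T.Adj x y) :
    T.dist u x ≠ T.dist u y := by
  intro heq
  obtain ⟨r₂, hp2, hl2, hx2⟩ := exists_shortest_avoiding hT u x y h.ne heq.ge
  obtain ⟨w, hw⟩ := hT.isConnected.exists_walk_length_eq_dist u x
  have hbp : w.bypass.length = T.dist u x :=
    le_antisymm (hw ▸ SimpleGraph.Walk.length_bypass_le w) (SimpleGraph.dist_le _)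
  set rx : T.Walk x u := w.bypass.reverse with hrx
  have hpx : rx.IsPath := (SimpleGraph.Walk.bypass_isPath w).reverse
  have hlx : rx.length = T.dist u x := by simpa [hrx] using hbp
  set q₂ : T.Walk x u := SimpleGraph.Walk.cons h r₂ with hq2
  have hq2p : q₂.IsPath := hp2.cons (hu := hx2) (h := h)
  obtain ⟨p, -, hup⟩ := hT.existsUnique_path x u
  have heqq : rx = q₂ := (hup rx hpx).trans (hup q₂ hq2p).symm
  have : rx.length = q₂.length := by rw [heqq]
  rw [hq2, SimpleGraph.Walk.length_cons, hl2, hlx, heq] at this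
  omega


lemma exists_leaf {W : Type} [Fintype W] [DecidableEq W] {T : SimpleGraph W}
    [DecidableRel T.Adj] (hT : T.IsTree) (h2 : 2 ≤ Fintype.card W) :
    ∃ ℓ u, T.Adj ℓ u ∧ T.neighborFinset ℓ = {u} := by
  classical
  have hcard := hT.card_edgeFinset
  have hsum : ∑ v, T.degree v = 2 * T.edgeFinset.card :=
    T.sum_degrees_eq_twice_card_edges
  -- there is a vertex of degree ≤ 1
  have hexist : ∃ ℓ : W, T.degree ℓ ≤ 1 := by
    by_contra hall
    push_neg at hall
    have : 2 * Fintype.card W ≤ ∑ v, T.degree v := by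
      calc 2 * Fintype.card W = ∑ _v : W, 2 := by
            simp [Finset.sum_const, mul_comm]
        _ ≤ ∑ v, T.degree v := Finset.sum_le_sum fun v _ => hall v
    omega
  obtain ⟨ℓ, hℓ⟩ := hexist
  -- degree ≥ 1 since connected with ≥ 2 vertices
  obtain ⟨w, hw⟩ := Fintype.exists_ne_of_one_lt_card (by omega) ℓ
  have hreach : T.Reachable ℓ w := hT.isConnected ℓ w
  have hpos : 0 < T.degree ℓ := by
    rw [T.degree_pos_iff_exists_adj]
    obtain ⟨p⟩ := hreach
    cases p with
    | nil => exact absurd rfl hw.symm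
    | cons h q => exact ⟨_, h⟩
  have hdeg : T.degree ℓ = 1 := le_antisymm hℓ hpos
  rw [SimpleGraph.degree] at hdeg
  obtain ⟨u, hu⟩ := Finset.card_eq_one.mp hdeg
  refine ⟨ℓ, u, ?_, hu⟩
  have : u ∈ T.neighborFinset ℓ := hu ▸ Finset.mem_singleton_self u
  exact (SimpleGraph.mem_neighborFinset _ _ _).mp this


lemma exists_order {W : Type} [Fintype W] [DecidableEq W] {T : SimpleGraph W}
    [DecidableRel T.Adj] (hT : T.IsTree) (h2 : 2 ≤ Fintype.card W) :
    ∃ L : List W, L.Nodup ∧ L.length = Fintype.card W ∧ (∀ w, w ∈ L) ∧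
      (∀ j (hj : j < L.length), 0 < j → ∀ i₁ i₂ (hi1 : i₁ < j) (hi2 : i₂ < j),
        T.Adj (L[i₁]'(lt_trans hi1 hj)) (L[j]'hj) →
        T.Adj (L[i₂]'(lt_trans hi2 hj)) (L[j]'hj) → i₁ = i₂) ∧
      (∀ i j (hj : j < L.length) (hi : i < j), j + 1 = L.length →
        T.Adj (L[i]'(lt_trans hi hj)) (L[j]'hj) → i = 0) := by
  classical
  obtain ⟨ℓ, u, hadj, hnb⟩ := exists_leaf hT h2
  have hue : u ≠ ℓ := hadj.ne'
  set le : W → W → Bool := fun a b => decide (T.dist u a ≤ T.dist u b) with hle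
  set rest : Finset W := (Finset.univ.erase ℓ).erase u with hrest
  set mid := rest.toList.mergeSort le with hmid
  have hperm : List.Perm mid rest.toList := List.mergeSort_perm rest.toList le
  have hmidnd : mid.Nodup := hperm.nodup_iff.mpr rest.nodup_toList
  have hmidmem : ∀ a, a ∈ mid ↔ (a ≠ u ∧ a ≠ ℓ) := by
    intro a
    rw [hperm.mem_iff, Finset.mem_toList, hrest]
    simp [Finset.mem_erase]
  have hsorted : mid.Pairwise (fun a b => le a b = true) :=
    List.pairwise_mergeSort (le := le)
      (fun a b c hab hbc => by
        simp only [hle, decide_eq_true_eq] at *; omega)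
      (fun a b => by simp only [hle, Bool.or_eq_true, decide_eq_true_eq]; omega)
      rest.toList
  have hsorted' : ∀ i j (hi : i < mid.length) (hj : j < mid.length), i < j →
      T.dist u (mid[i]'hi) ≤ T.dist u (mid[j]'hj) := by
    rw [List.pairwise_iff_getElem] at hsorted
    intro i j hi hj hij
    have := hsorted i j hi hj hij
    simpa [hle] using this
  have hmidlen : mid.length = Fintype.card W - 2 := by
    rw [hperm.length_eq, Finset.length_toList, hrest,
      Finset.card_erase_of_mem (by simp [Finset.mem_erase, hue]),
      Finset.card_erase_of_mem (by simp), Finset.card_univ]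
    omega
  set L : List W := u :: (mid ++ [ℓ]) with hL
  have hlen : L.length = Fintype.card W := by
    simp only [hL, List.length_cons, List.length_append, List.length_nil]
    omega
  have hnd : L.Nodup := by
    rw [hL]
    refine List.nodup_cons.mpr ⟨?_, ?_⟩
    · rw [List.mem_append]
      rintro (h | h)
      · exact ((hmidmem u).mp h).1 rfl
      · exact hue (List.mem_singleton.mp h)
    · refine List.Nodup.append hmidnd (List.nodup_singleton ℓ) ?_
      intro a ha hb
      exact ((hmidmem a).mp ha).2 (List.mem_singleton.mp hb)
  have hmem : ∀ w, w ∈ L := by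
    intro w
    rw [hL]
    by_cases hwu : w = u
    · simp [hwu]
    by_cases hwl : w = ℓ
    · simp [hwl]
    · exact List.mem_cons_of_mem _ (List.mem_append_left _ ((hmidmem w).mpr ⟨hwu, hwl⟩))
  -- getElem facts
  have hget0 : L[0]'(by rw [hlen]; omega) = u := rfl
  have hgetmid : ∀ k (hk : k < mid.length), L[k+1]'(by
        simp only [hL, List.length_cons, List.length_append, List.length_singleton]; omega) =
      mid[k]'hk := by
    intro k hk
    simp only [hL, List.getElem_cons_succ]
    exact List.getElem_append_left hk
  have hgetlast : L[L.length - 1]'(by rw [hlen]; omega) = ℓ := by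
    simp only [hL]
    rw [List.getElem_cons]
    split
    · rename_i h0
      simp only [List.length_cons, List.length_append, List.length_nil] at h0
      omega
    · exact List.getElem_concat_length
        (by simp only [List.length_cons, List.length_append, List.length_nil]; omega) _
  have hLlen' : L.length = mid.length + 2 := by
    simp only [hL, List.length_cons, List.length_append, List.length_nil]
  have P2 : ∀ i j (hj : j < L.length) (hi : i < j), j + 1 = L.length →
      T.Adj (L[i]'(lt_trans hi hj)) (L[j]'hj) → i = 0 := by
    intro i j hj hi hjlen hadji
    have hi : i < L.length - 1 := by omega
    have hjeq : j = L.length - 1 := by omega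
    subst hjeq
    rw [hgetlast] at hadji
    have hmemnb : L[i]'(by omega) ∈ T.neighborFinset ℓ :=
      (SimpleGraph.mem_neighborFinset _ _ _).mpr hadji.symm
    rw [hnb, Finset.mem_singleton] at hmemnb
    have heq0 : L[i]'(by omega) = L[0]'(by rw [hlen]; omega) := by rw [hmemnb, hget0]
    exact hnd.getElem_inj_iff.mp heq0
  have hdistle : ∀ i j (hi : i < j) (hj : j < L.length - 1) (hj0 : 0 < j),
      T.dist u (L[i]'(by omega)) ≤ T.dist u (L[j]'(by omega)) := by
    intro i j hi hj hj0
    obtain ⟨k, rfl⟩ : ∃ k, j = k + 1 := ⟨j - 1, by omega⟩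
    have hk : k < mid.length := by omega
    rw [hgetmid k hk]
    rcases Nat.eq_zero_or_pos i with h0 | hpos
    · subst h0
      rw [hget0]
      simp [SimpleGraph.dist_self]
    · obtain ⟨k', rfl⟩ : ∃ k', i = k' + 1 := ⟨i - 1, by omega⟩
      have hk' : k' < mid.length := by omega
      rw [hgetmid k' hk']
      exact hsorted' k' k hk' hk (by omega)
  have P1 : ∀ j (hj : j < L.length), 0 < j → ∀ i₁ i₂ (hi1 : i₁ < j) (hi2 : i₂ < j),
      T.Adj (L[i₁]'(lt_trans hi1 hj)) (L[j]'hj) →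
      T.Adj (L[i₂]'(lt_trans hi2 hj)) (L[j]'hj) → i₁ = i₂ := by
    intro j hj hj0 i₁ i₂ hi1 hi2 ha1 ha2
    by_contra hne12
    have hy12 : ¬ (L[i₁]'(lt_trans hi1 hj) = L[i₂]'(lt_trans hi2 hj)) := fun h =>
      hne12 (hnd.getElem_inj_iff.mp h)
    rcases Nat.lt_or_ge j (L.length - 1) with hjlt | hjge
    · have d1 := hdistle i₁ j hi1 hjlt hj0
      have d2 := hdistle i₂ j hi2 hjlt hj0
      exact no_two_low_neighbors hT u (L[j]'hj) _ _ ha1.symm ha2.symm hy12 d1 d2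
    · 
      have e1 : i₁ = 0 := P2 i₁ j hj hi1 (by omega) ha1
      have e2 : i₂ = 0 := P2 i₂ j hj hi2 (by omega) ha2
      exact hne12 (e1.trans e2.symm)
  exact ⟨L, hnd, hlen, hmem, P1, P2⟩


lemma greedy {V : Type} [Fintype V] [DecidableEq V] {W : Type} [Fintype W] [DecidableEq W]
    (G : SimpleGraph V) [DecidableRel G.Adj] (T : SimpleGraph W) [DecidableRel T.Adj]
    (t : ℕ) (ht : 1 ≤ t)
    (S : Finset V) (hmin : ∀ v ∈ S, t - 1 ≤ (S.filter (G.Adj v)).card)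
    (v₀ : V) (hv₀ : v₀ ∈ S) (hv₀deg : t ≤ (S.filter (G.Adj v₀)).card)
    (L : List W) (hnd : L.Nodup) (hlen : L.length = t + 1) (hmem : ∀ w, w ∈ L)
    (P1 : ∀ j (hj : j < L.length), 0 < j → ∀ i₁ i₂ (hi1 : i₁ < j) (hi2 : i₂ < j),
        T.Adj (L[i₁]'(lt_trans hi1 hj)) (L[j]'hj) →
        T.Adj (L[i₂]'(lt_trans hi2 hj)) (L[j]'hj) → i₁ = i₂)
    (P2 : ∀ i j (hj : j < L.length) (hi : i < j), j + 1 = L.length →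
        T.Adj (L[i]'(lt_trans hi hj)) (L[j]'hj) → i = 0) :
    ∃ f : W ↪ V, ∀ a b, T.Adj a b → G.Adj (f a) (f b) := by
  classical
  have hScard : t + 1 ≤ S.card := by
    have h1 : insert v₀ (S.filter (G.Adj v₀)) ⊆ S := by
      intro a ha
      rcases Finset.mem_insert.mp ha with rfl | h
      · exact hv₀
      · exact (Finset.mem_filter.mp h).1
    have h2 : v₀ ∉ S.filter (G.Adj v₀) := by simp [G.irrefl]
    have h3 := Finset.card_insert_of_notMem h2
    have h4 := Finset.card_le_card h1
    omega
  have key : ∀ r (_ : r ≤ t + 1), ∃ (M : List V) (_ : M.length = r), M.Nodup ∧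
      (∀ x ∈ M, x ∈ S) ∧ (∀ (h : 0 < r), M[0]'(by omega) = v₀) ∧
      ∀ i j (hij : i < j) (hj : j < r),
        T.Adj (L[i]'(by omega)) (L[j]'(by omega)) →
        G.Adj (M[i]'(by omega)) (M[j]'(by omega)) := by
    intro r
    induction r with
    | zero =>
      intro _
      exact ⟨[], rfl, List.nodup_nil, by simp, fun h => absurd h (by omega),
        fun i j hij hj => absurd hj (by omega)⟩
    | succ r ih =>
      intro hr1
      rcases Nat.eq_zero_or_pos r with rfl | hrpos
      · refine ⟨[v₀], rfl, List.nodup_singleton _, by simp [hv₀], fun _ => rfl, ?_⟩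
        intro i j hij hj
        omega
      obtain ⟨M, hMlen, hMnd, hMS, hM0, hMinv⟩ := ih (by omega)
      have hrL : r < L.length := by omega
      by_cases hEx : ∃ i, ∃ (hi : i < r), T.Adj (L[i]'(by omega)) (L[r]'hrL)
      · obtain ⟨i₀, hi₀, ha₀⟩ := hEx
        set v₁ : V := M[i₀]'(by omega) with hv₁
        have hv₁S : v₁ ∈ S := hMS _ (List.getElem_mem _)
        have hv₁deg : r - 1 < (S.filter (G.Adj v₁)).card := by
          rcases Nat.lt_or_ge r t with hlt | hge
          · have := hmin v₁ hv₁S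
            omega
          · -- r = t, so i₀ = 0 and v₁ = v₀
            have hrt : r = t := by omega
            have hi₀0 : i₀ = 0 := P2 i₀ r hrL hi₀ (by omega) ha₀
            have : v₁ = v₀ := by rw [hv₁]; simp only [hi₀0]; exact hM0 hrpos
            rw [this]
            omega
        have hcand : 0 < ((S.filter (G.Adj v₁)) \ M.toFinset).card := by
          have hv₁nf : v₁ ∉ S.filter (G.Adj v₁) := by simp [G.irrefl]
          have hsub : (S.filter (G.Adj v₁)) \ M.toFinset
              = (S.filter (G.Adj v₁)) \ (M.toFinset.erase v₁) := by
            ext a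
            simp only [Finset.mem_sdiff, Finset.mem_erase]
            constructor
            · rintro ⟨h1, h2⟩; exact ⟨h1, fun hh => h2 hh.2⟩
            · rintro ⟨h1, h2⟩
              refine ⟨h1, fun hh => h2 ⟨fun he => ?_, hh⟩⟩
              subst he; exact hv₁nf h1
          have hle := Finset.le_card_sdiff (M.toFinset.erase v₁) (S.filter (G.Adj v₁))
          have hcv₁ : v₁ ∈ M.toFinset := by
            rw [List.mem_toFinset]; exact List.getElem_mem _
          have hec : (M.toFinset.erase v₁).card = r - 1 := by
            rw [Finset.card_erase_of_mem hcv₁, List.card_toFinset, hMnd.dedup]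
            omega
          rw [hsub]
          omega
        obtain ⟨x, hx⟩ := Finset.card_pos.mp hcand
        rw [Finset.mem_sdiff, Finset.mem_filter] at hx
        obtain ⟨⟨hxS, hxadj⟩, hxM⟩ := hx
        rw [List.mem_toFinset] at hxM
        refine ⟨M ++ [x], by simp [hMlen], ?_, ?_, ?_, ?_⟩
        · exact hMnd.append (List.nodup_singleton x)
            (fun a ha hb => by rw [List.mem_singleton] at hb; subst hb; exact hxM ha)
        · intro y hy
          rcases List.mem_append.mp hy with h | h
          · exact hMS y h
          · rw [List.mem_singleton] at h; subst h; exact hxS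
        · intro _
          rw [List.getElem_append_left (by omega)]
          exact hM0 hrpos
        · intro i j hij hj hadj
          rcases Nat.lt_or_ge j r with hjr | hjr
          · rw [List.getElem_append_left (by omega), List.getElem_append_left (by omega)]
            exact hMinv i j hij hjr hadj
          · have hjeq : j = r := by omega
            subst hjeq
            have hieq : i = i₀ := P1 j hrL (by omega) i i₀ hij hi₀ hadj ha₀
            subst hieq
            rw [List.getElem_append_left (by omega),
              List.getElem_concat_length (by omega)]
            exact hxadj
      · -- no earlier neighbour: pick any unused vertex of S
        have hcand : 0 < (S \ M.toFinset).card := by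
          have hle := Finset.le_card_sdiff M.toFinset S
          have : M.toFinset.card = r := by rw [List.card_toFinset, hMnd.dedup]; exact hMlen
          omega
        obtain ⟨x, hx⟩ := Finset.card_pos.mp hcand
        rw [Finset.mem_sdiff, List.mem_toFinset] at hx
        obtain ⟨hxS, hxM⟩ := hx
        refine ⟨M ++ [x], by simp [hMlen], ?_, ?_, ?_, ?_⟩
        · exact hMnd.append (List.nodup_singleton x)
            (fun a ha hb => by rw [List.mem_singleton] at hb; subst hb; exact hxM ha)
        · intro y hy
          rcases List.mem_append.mp hy with h | h
          · exact hMS y h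
          · rw [List.mem_singleton] at h; subst h; exact hxS
        · intro _
          rw [List.getElem_append_left (by omega)]
          exact hM0 hrpos
        · intro i j hij hj hadj
          rcases Nat.lt_or_ge j r with hjr | hjr
          · rw [List.getElem_append_left (by omega), List.getElem_append_left (by omega)]
            exact hMinv i j hij hjr hadj
          · have hjeq : j = r := by omega
            subst hjeq
            exact absurd ⟨i, hij, hadj⟩ hEx
  obtain ⟨M, hMlen, hMnd, hMS, hM0, hMinv⟩ := key (t + 1) le_rfl
  have hidx : ∀ w : W, L.idxOf w < t + 1 := fun w => by
    have := List.idxOf_lt_length_iff.mpr (hmem w)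
    omega
  refine ⟨⟨fun w => M[L.idxOf w]'(by rw [hMlen]; exact hidx w), ?_⟩, ?_⟩
  · intro a b hab
    simp only at hab
    have hieq : L.idxOf a = L.idxOf b := hMnd.getElem_inj_iff.mp hab
    have h1 : L[L.idxOf a]'(by rw [hlen]; exact hidx a) = a := List.getElem_idxOf _
    have h2 : L[L.idxOf b]'(by rw [hlen]; exact hidx b) = b := List.getElem_idxOf _
    rw [← h1, ← h2]
    exact hnd.getElem_inj_iff.mpr hieq ▸ rfl
  · intro a b hab
    show G.Adj (M[L.idxOf a]'(by rw [hMlen]; exact hidx a)) (M[L.idxOf b]'(by rw [hMlen]; exact hidx b))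
    set i := L.idxOf a with hia
    set j := L.idxOf b with hjb
    have h1 : L[i]'(by rw [hlen]; exact hidx a) = a := List.getElem_idxOf _
    have h2 : L[j]'(by rw [hlen]; exact hidx b) = b := List.getElem_idxOf _
    have hij : i ≠ j := by
      intro h
      apply hab.ne
      rw [← h1, ← h2]
      exact hnd.getElem_inj_iff.mpr h ▸ rfl
    rcases Nat.lt_or_ge i j with hlt | hge
    · exact hMinv i j hlt (hidx b) (by rw [h1, h2]; exact hab)
    · have hlt : j < i := by omega
      exact (hMinv j i hlt (hidx a) (by rw [h1, h2]; exact hab.symm)).symm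


lemma erase_sum {V : Type} [DecidableEq V] (G : SimpleGraph V) [DecidableRel G.Adj]
    (S : Finset V) (v : V) (hv : v ∈ S) :
    ∑ u ∈ S.erase v, ((S.erase v).filter (G.Adj u)).card
        + 2 * (S.filter (G.Adj v)).card
      = ∑ u ∈ S, (S.filter (G.Adj u)).card := by
  classical
  have hc : ∀ (A : Finset V) (u : V),
      (A.filter (G.Adj u)).card = ∑ w ∈ A, if G.Adj u w then 1 else 0 :=
    fun A u => Finset.card_filter _ _
  simp only [hc]
  have step2 : ∀ u, ∑ w ∈ S, (if G.Adj u w then 1 else 0)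
      = ∑ w ∈ S.erase v, (if G.Adj u w then 1 else 0) + (if G.Adj u v then 1 else 0) :=
    fun u => (Finset.sum_erase_add S _ hv).symm
  have step1 : ∑ u ∈ S, (∑ w ∈ S, if G.Adj u w then 1 else 0)
      = ∑ u ∈ S.erase v, (∑ w ∈ S, if G.Adj u w then 1 else 0)
        + ∑ w ∈ S, (if G.Adj v w then 1 else 0) :=
    (Finset.sum_erase_add S _ hv).symm
  have step3 : ∑ u ∈ S.erase v, (if G.Adj u v then 1 else 0)
      = ∑ w ∈ S.erase v, (if G.Adj v w then 1 else 0) :=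
    Finset.sum_congr rfl (fun u _ => by
      by_cases h : G.Adj u v
      · simp [h, h.symm]
      · have h' : ¬ G.Adj v u := fun hh => h hh.symm
        simp [h, h'])
  have step4 : ∑ w ∈ S, (if G.Adj v w then 1 else 0)
      = ∑ w ∈ S.erase v, (if G.Adj v w then 1 else 0) := by
    rw [step2 v]
    simp [G.irrefl]
  rw [step1, Finset.sum_congr rfl (fun u (_ : u ∈ S.erase v) => step2 u),
    Finset.sum_add_distrib, step3, ← step4]
  ring

lemma exists_good_subset {V : Type} [Fintype V] [DecidableEq V] (t : ℕ) (ht : 1 ≤ t)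
    (G : SimpleGraph V) [DecidableRel G.Adj] :
    ∀ k (S : Finset V) (_ : S.card ≤ k)
      (_ : (2*((t:ℝ) - 2) + 2/t) * S.card < ∑ v ∈ S, ((S.filter (G.Adj v)).card : ℝ)),
      ∃ S' : Finset V, (∀ v ∈ S', t - 1 ≤ (S'.filter (G.Adj v)).card) ∧
        ∃ v₀ ∈ S', t ≤ (S'.filter (G.Adj v₀)).card := by
  intro k
  induction k with
  | zero =>
    intro S hS hinv
    have hS0 : S = ∅ := Finset.card_eq_zero.mp (le_antisymm hS (Nat.zero_le _))
    subst hS0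
    simp at hinv
  | succ k ih =>
    intro S hS hinv
    by_cases hdel : ∃ v ∈ S, (S.filter (G.Adj v)).card + 1 < t
    · obtain ⟨v, hvS, hvdeg⟩ := hdel
      have ht2 : 2 ≤ t := by omega
      have hscard : 1 ≤ S.card := Finset.card_pos.mpr ⟨v, hvS⟩
      apply ih (S.erase v) (by rw [Finset.card_erase_of_mem hvS]; omega)
      have hsum := erase_sum G S v hvS
      have hcast : (∑ u ∈ S.erase v, (((S.erase v).filter (G.Adj u)).card : ℝ))
          = ∑ u ∈ S, ((S.filter (G.Adj u)).card : ℝ)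
            - 2 * ((S.filter (G.Adj v)).card : ℝ) := by
        have h := congrArg (Nat.cast : ℕ → ℝ) hsum
        push_cast at h
        linarith
      rw [hcast, Finset.card_erase_of_mem hvS]
      have h1 : ((S.card - 1 : ℕ) : ℝ) = (S.card : ℝ) - 1 := by
        rw [Nat.cast_sub hscard]; norm_num
      rw [h1]
      have hd : ((S.filter (G.Adj v)).card : ℝ) ≤ (t : ℝ) - 2 := by
        have h2 : (S.filter (G.Adj v)).card ≤ t - 2 := by omega
        have h3 := (Nat.cast_le (α := ℝ)).mpr h2
        rw [Nat.cast_sub ht2] at h3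
        simpa using h3
      have htpos : (0:ℝ) < t := by
        have : 0 < t := by omega
        exact_mod_cast this
      have h2t : (0:ℝ) < 2 / t := by positivity
      have expand : (2*((t:ℝ) - 2) + 2/t) * ((S.card : ℝ) - 1)
          = (2*((t:ℝ) - 2) + 2/t) * (S.card : ℝ) - (2*((t:ℝ) - 2) + 2/t) := by ring
      linarith [hinv]
    · push_neg at hdel
      refine ⟨S, fun v hv => by have := hdel v hv; omega, ?_⟩
      by_contra hno
      push_neg at hno
      have hcpos : 0 < S.card := by
        rcases Nat.eq_zero_or_pos S.card with h0 | h
        · rw [Finset.card_eq_zero.mp h0] at hinv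
          simp at hinv
        · exact h
      have hub : ∑ v ∈ S, ((S.filter (G.Adj v)).card : ℝ) ≤ ((t:ℝ) - 1) * S.card := by
        have : ∑ v ∈ S, ((S.filter (G.Adj v)).card : ℝ) ≤ ∑ _v ∈ S, ((t:ℝ) - 1) :=
          Finset.sum_le_sum (fun v hv => by
            have h1 := hno v hv
            have h2 : (S.filter (G.Adj v)).card ≤ t - 1 := by omega
            have h3 := (Nat.cast_le (α := ℝ)).mpr h2
            rw [Nat.cast_sub ht] at h3
            simpa using h3)
        calc ∑ v ∈ S, ((S.filter (G.Adj v)).card : ℝ)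
            ≤ ∑ _v ∈ S, ((t:ℝ) - 1) := this
          _ = ((t:ℝ) - 1) * S.card := by
              rw [Finset.sum_const, nsmul_eq_mul]; ring
      have hx1 : (1:ℝ) ≤ t := by exact_mod_cast ht
      have hxpos : (0:ℝ) < t := by linarith
      have hc0 : (0:ℝ) < S.card := by exact_mod_cast hcpos
      have hAc : 2*((t:ℝ) - 2) + 2/t < (t:ℝ) - 1 :=
        lt_of_mul_lt_mul_right (lt_of_lt_of_le hinv hub) (le_of_lt hc0)
      have hnn : (0:ℝ) ≤ ((t:ℝ) - 1) * ((t:ℝ) - 2) := by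
        rcases Nat.lt_or_ge t 2 with h | h
        · have h1 : t = 1 := by omega
          subst h1
          norm_num
        · have h2 : (2:ℝ) ≤ t := by exact_mod_cast h
          nlinarith
      have hmul := mul_lt_mul_of_pos_right hAc hxpos
      have h2x : 2 / (t:ℝ) * (t:ℝ) = 2 := div_mul_cancel₀ 2 (ne_of_gt hxpos)
      nlinarith [hmul, h2x, hnn]

end TuranAux

open TuranAux in
/-- **Proposition (even case).** Let `t` be an even natural number and let `G`
be a graph on `n` vertices with more than `(1 - 1/t)·(t-1)·n` edges. Then `G`
contains every tree with `t` edges. -/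
theorem turan_trees_even {V : Type} [Fintype V] [DecidableEq V] (t n : ℕ)
    (ht : Even t) (G : SimpleGraph V) [DecidableRel G.Adj]
    (hn : Fintype.card V = n)
    (hm : (1 - 1 / (t : ℝ)) * ((t : ℝ) - 1) * n < G.edgeFinset.card) :
    ∀ (W : Type) [Fintype W] [DecidableEq W] (T : SimpleGraph W)
      [DecidableRel T.Adj], T.IsTree → T.edgeFinset.card = t →
      ∃ f : W ↪ V, ∀ a b, T.Adj a b → G.Adj (f a) (f b) := by
  classical
  intro W _ _ T _ hTree hTedges
  have hcardW : Fintype.card W = t + 1 := by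
    have := hTree.card_edgeFinset
    omega
  rcases Nat.eq_zero_or_pos t with ht0 | htpos
  · -- t = 0 : the tree is a single vertex
    subst ht0
    have hW1 : Fintype.card W = 1 := hcardW
    have hnpos : 0 < n := by
      by_contra h
      have hn0 : n = 0 := by omega
      subst hn0
      have hVempty : IsEmpty V := Fintype.card_eq_zero_iff.mp hn
      have he : 2 * G.edgeFinset.card = 0 := by
        rw [← G.sum_degrees_eq_twice_card_edges, Finset.univ_eq_empty, Finset.sum_empty]
      have he0 : G.edgeFinset.card = 0 := by omega
      rw [he0] at hm
      norm_num at hm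
    have : 0 < Fintype.card V := by omega
    obtain ⟨v⟩ := Fintype.card_pos_iff.mp this
    have hsub : ∀ a b : W, a = b := fun a b =>
      Fintype.card_le_one_iff.mp (by omega) a b
    refine ⟨⟨fun _ => v, fun a b _ => hsub a b⟩, ?_⟩
    intro a b hab
    exact absurd (hsub a b) hab.ne
  · -- t ≥ 1
    have hx1 : (1:ℝ) ≤ t := by exact_mod_cast htpos
    have hxpos : (0:ℝ) < t := by linarith
    have hxne : (t:ℝ) ≠ 0 := ne_of_gt hxpos
    have hfil : ∀ v : V, Finset.univ.filter (G.Adj v) = G.neighborFinset v := by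
      intro v
      ext w
      simp [SimpleGraph.mem_neighborFinset]
    have hdegsum : ∑ v : V, ((Finset.univ.filter (G.Adj v)).card : ℝ)
        = 2 * G.edgeFinset.card := by
      have h1 : ∑ v : V, (Finset.univ.filter (G.Adj v)).card
          = 2 * G.edgeFinset.card := by
        rw [← G.sum_degrees_eq_twice_card_edges]
        exact Finset.sum_congr rfl fun v _ => by rw [hfil v]; rfl
      exact_mod_cast congrArg (Nat.cast : ℕ → ℝ) h1
    have hinv : (2*((t:ℝ) - 2) + 2/t) * (Finset.univ : Finset V).card
        < ∑ v ∈ (Finset.univ : Finset V), (((Finset.univ : Finset V).filter (G.Adj v)).card : ℝ) := by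
      rw [hdegsum, Finset.card_univ, hn]
      have hid : (1 - 1 / (t : ℝ)) * ((t : ℝ) - 1) = (t:ℝ) - 2 + 1/t := by
        field_simp
        ring
      rw [hid] at hm
      have h2 : (2*((t:ℝ) - 2) + 2/t) * (n:ℝ) = 2 * (((t:ℝ) - 2 + 1/t) * n) := by ring
      rw [h2]
      linarith
    obtain ⟨S, hmin, v₀, hv₀, hv₀deg⟩ :=
      exists_good_subset t htpos G (Finset.univ : Finset V).card Finset.univ le_rfl hinv
    obtain ⟨L, hnd, hlenW, hmemL, P1, P2⟩ := exists_order hTree (by omega)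
    have hlen : L.length = t + 1 := by rw [hlenW, hcardW]
    exact greedy G T t htpos S hmin v₀ hv₀ hv₀deg L hnd hlen hmemL P1 P2
end

section
/- Let G be a bipartite graph with m edges whose set of non-isolated vertices has size s. If m > ((t-1)/2)·s, then G contains (as a subgraph) every tree T having t edges. (This is the case r = 2 of the main theorem, since for a graph the shadow is exactly its set of non-isolated vertices.) -/
open Finset SimpleGraph

set_option linter.unusedSectionVars false

variable {V : Type} [Fintype V] [DecidableEq V]

private def degIn (G : SimpleGraph V) [DecidableRel G.Adj] (S : Finset V) (v : V) : ℕ :=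
  (S.filter (G.Adj v)).card

private lemma degIn_mono (G : SimpleGraph V) [DecidableRel G.Adj] {S S' : Finset V}
    (h : S ⊆ S') (v : V) : degIn G S v ≤ degIn G S' v :=
  Finset.card_le_card (Finset.filter_subset_filter _ h)

private lemma degIn_erase (G : SimpleGraph V) [DecidableRel G.Adj] (S : Finset V) (v x : V) :
    degIn G S x = degIn G (S.erase v) x + (if v ∈ S ∧ G.Adj x v then 1 else 0) := by
  unfold degIn
  rw [Finset.filter_erase]
  by_cases h : v ∈ S ∧ G.Adj x v
  · rw [if_pos h]
    have hv : v ∈ S.filter (G.Adj x) := Finset.mem_filter.2 ⟨h.1, h.2⟩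
    rw [Finset.card_erase_of_mem hv]
    have := Finset.card_pos.2 ⟨v, hv⟩
    omega
  · rw [if_neg h]
    have hv : v ∉ S.filter (G.Adj x) := by
      intro hv; exact h ⟨(Finset.mem_filter.1 hv).1, (Finset.mem_filter.1 hv).2⟩
    rw [Finset.erase_eq_of_notMem hv, add_zero]

private lemma sum_degIn_erase (G : SimpleGraph V) [DecidableRel G.Adj] (S : Finset V) {v : V}
    (hv : v ∈ S) :
    ∑ x ∈ S, degIn G S x = (∑ x ∈ S.erase v, degIn G (S.erase v) x) + 2 * degIn G S v := by
  rw [← Finset.add_sum_erase S _ hv]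
  have h1 : ∑ x ∈ S.erase v, degIn G S x
      = (∑ x ∈ S.erase v, degIn G (S.erase v) x)
        + ∑ x ∈ S.erase v, (if v ∈ S ∧ G.Adj x v then 1 else 0) := by
    rw [← Finset.sum_add_distrib]
    exact Finset.sum_congr rfl fun x _ => degIn_erase G S v x
  have h2 : ∑ x ∈ S.erase v, (if v ∈ S ∧ G.Adj x v then 1 else 0) = degIn G S v := by
    rw [Finset.sum_boole]
    have : (S.erase v).filter (fun x => v ∈ S ∧ G.Adj x v) = S.filter (G.Adj v) := by
      ext x
      simp only [Finset.mem_filter, Finset.mem_erase]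
      constructor
      · rintro ⟨⟨-, hx⟩, -, hadj⟩; exact ⟨hx, hadj.symm⟩
      · rintro ⟨hx, hadj⟩; exact ⟨⟨G.ne_of_adj hadj.symm, hx⟩, hv, hadj.symm⟩
    rw [this]; rfl
  omega

private lemma coreA (G : SimpleGraph V) [DecidableRel G.Adj] :
    ∀ (n : ℕ) (S : Finset V), S.card = n → ∀ (w : V → ℕ),
      (∑ v ∈ S.filter (fun v => 0 < degIn G S v), 2 * w v) < ∑ v ∈ S, degIn G S v →
      ∃ S', S' ⊆ S ∧ S'.Nonempty ∧ ∀ v ∈ S', w v < degIn G S' v := by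
  intro n
  induction n using Nat.strong_induction_on with
  | _ n ih =>
    intro S hcard w hlt
    by_cases hbad : ∃ v ∈ S, 0 < degIn G S v ∧ degIn G S v ≤ w v
    · -- delete a bad vertex
      obtain ⟨v, hvS, hvpos, hvw⟩ := hbad
      set S₂ := S.erase v with hS₂
      have hsum := sum_degIn_erase G S hvS
      rw [← hS₂] at hsum
      have hvP : v ∈ S.filter (fun v => 0 < degIn G S v) := Finset.mem_filter.2 ⟨hvS, hvpos⟩
      have hPsum : ∑ x ∈ S.filter (fun v => 0 < degIn G S v), 2 * w x
          = (∑ x ∈ (S.filter (fun v => 0 < degIn G S v)).erase v, 2 * w x) + 2 * w v := by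
        rw [← Finset.add_sum_erase _ _ hvP]; ring
      have hsub : S₂.filter (fun x => 0 < degIn G S₂ x)
          ⊆ (S.filter (fun v => 0 < degIn G S v)).erase v := by
        intro x hx
        rw [Finset.mem_filter] at hx
        rw [Finset.mem_erase, Finset.mem_filter]
        have hxS₂ := Finset.mem_erase.1 hx.1
        exact ⟨hxS₂.1, hxS₂.2,
          lt_of_lt_of_le hx.2 (degIn_mono G (Finset.erase_subset _ _) x)⟩
      have h1 : ∑ x ∈ S₂.filter (fun x => 0 < degIn G S₂ x), 2 * w x
          ≤ ∑ x ∈ (S.filter (fun v => 0 < degIn G S v)).erase v, 2 * w x :=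
        Finset.sum_le_sum_of_subset hsub
      have hlt2 : (∑ x ∈ S₂.filter (fun x => 0 < degIn G S₂ x), 2 * w x)
          < ∑ x ∈ S₂, degIn G S₂ x := by omega
      have hsmall : S₂.card < n := by
        rw [← hcard, hS₂]
        exact Finset.card_erase_lt_of_mem hvS
      obtain ⟨S', hS'sub, hne, hgood⟩ := ih S₂.card hsmall S₂ rfl w hlt2
      exact ⟨S', hS'sub.trans (Finset.erase_subset _ _), hne, hgood⟩
    · push_neg at hbad
      refine ⟨S.filter (fun v => 0 < degIn G S v), Finset.filter_subset _ _, ?_, ?_⟩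
      · -- nonempty since total degree is positive
        by_contra hemp
        rw [Finset.not_nonempty_iff_eq_empty] at hemp
        have : ∀ x ∈ S, degIn G S x = 0 := by
          intro x hx
          by_contra h0
          have : x ∈ S.filter (fun v => 0 < degIn G S v) :=
            Finset.mem_filter.2 ⟨hx, Nat.pos_of_ne_zero h0⟩
          rw [hemp] at this
          exact absurd this (Finset.notMem_empty x)
        rw [Finset.sum_eq_zero this] at hlt
        omega
      · intro x hx
        have hx' := Finset.mem_filter.1 hx
        have key : degIn G (S.filter (fun v => 0 < degIn G S v)) x = degIn G S x := by
          unfold degIn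
          congr 1
          rw [Finset.filter_filter]
          apply Finset.filter_congr
          intro y hy
          rw [and_iff_right_iff_imp]
          intro hadj
          have : x ∈ S.filter (G.Adj y) := Finset.mem_filter.2 ⟨hx'.1, hadj.symm⟩
          exact Finset.card_pos.2 ⟨x, this⟩
        rw [key]
        exact hbad x hx'.1 hx'.2

section TreeLemmas

variable {W : Type} [Fintype W] [DecidableEq W]

private lemma exists_leaf_s10 (T : SimpleGraph W) [DecidableRel T.Adj] (hT : T.IsTree)
    (h2 : 2 ≤ Fintype.card W) : ∃ l, T.degree l = 1 := by
  by_contra hno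
  push_neg at hno
  have hdeg : ∀ v, 2 ≤ T.degree v := by
    intro v
    have hpos : 0 < T.degree v := by
      rw [T.degree_pos_iff_exists_adj]
      obtain ⟨u, hu⟩ := Fintype.exists_ne_of_one_lt_card (by omega) v
      obtain ⟨p⟩ := hT.isConnected.preconnected v u
      cases p with
      | nil => exact absurd rfl hu.symm
      | cons h _ => exact ⟨_, h⟩
    have := hno v
    omega
  have hsum : ∑ v : W, T.degree v = 2 * T.edgeFinset.card :=
    T.sum_degrees_eq_twice_card_edges
  have hcard : T.edgeFinset.card + 1 = Fintype.card W := hT.card_edgeFinset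
  have hge : 2 * Fintype.card W ≤ ∑ v : W, T.degree v := by
    calc 2 * Fintype.card W = ∑ _v : W, 2 := by
          rw [Finset.sum_const, Finset.card_univ]; ring
      _ ≤ ∑ v : W, T.degree v := Finset.sum_le_sum fun v _ => hdeg v
  omega

/-- a non-nil walk starting at `l` uses an edge at `l`. -/
private lemma first_edge {T : SimpleGraph W} {l y : W} (q : T.Walk l y) (hy : l ≠ y) :
    ∃ u, T.Adj l u ∧ s(l, u) ∈ q.edges := by
  cases q with
  | nil => exact absurd rfl hy
  | cons h r => exact ⟨_, h, by simp⟩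

private lemma leaf_not_mem_support {T : SimpleGraph W} [DecidableRel T.Adj] {l : W}
    (hdeg : T.degree l = 1) {x y : W} (hx : x ≠ l) (hy : y ≠ l) (p : T.Walk x y)
    (hp : p.IsPath) : l ∉ p.support := by
  intro hl
  obtain ⟨p0, hp0⟩ := Finset.card_eq_one.1 (by rw [← hdeg]; rfl :
    (T.neighborFinset l).card = 1)
  have huniq : ∀ z, T.Adj l z → z = p0 := by
    intro z hz
    have : z ∈ T.neighborFinset l := (T.mem_neighborFinset l z).2 hz
    rw [hp0] at this
    exact Finset.mem_singleton.1 this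
  have hspec := p.take_spec hl
  set q1 := p.takeUntil l hl with hq1
  set q2 := p.dropUntil l hl with hq2
  obtain ⟨w, hw, hwe⟩ := first_edge q2 (fun h => hy h.symm)
  obtain ⟨u, hu, hue⟩ := first_edge q1.reverse (fun h => hx h.symm)
  have hwp : w = p0 := huniq w hw
  have hup : u = p0 := huniq u hu
  have hue' : s(l, p0) ∈ q1.edges := by
    rw [← hup]
    have := hue
    rwa [SimpleGraph.Walk.edges_reverse, List.mem_reverse] at this
  have hwe' : s(l, p0) ∈ q2.edges := by rwa [← hwp]
  have hnodup : (q1.append q2).edges.Nodup := by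
    rw [hspec]; exact hp.isTrail.edges_nodup
  rw [SimpleGraph.Walk.edges_append] at hnodup
  exact List.disjoint_of_nodup_append hnodup hue' hwe' 

private lemma reachable_induce {T : SimpleGraph W} {s : Set W} :
    ∀ {a b : W} (p : T.Walk a b), (∀ z ∈ p.support, z ∈ s) → ∀ (ha : a ∈ s) (hb : b ∈ s),
      (T.induce s).Reachable ⟨a, ha⟩ ⟨b, hb⟩ := by
  intro a b p
  induction p with
  | nil => intro _ ha hb; rfl
  | @cons a c b h q ih =>
    intro hs ha hb
    have hc : c ∈ s := hs c (by simp)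
    have hadj : (T.induce s).Adj ⟨a, ha⟩ ⟨c, hc⟩ := h
    exact (hadj.reachable).trans (ih (fun z hz => hs z (by simp [hz])) hc hb)

private lemma isTree_induce_of_leaf {T : SimpleGraph W} [DecidableRel T.Adj] {l : W}
    (hT : T.IsTree) (hdeg : T.degree l = 1) (h2 : 2 ≤ Fintype.card W) :
    (T.induce {x : W | x ≠ l}).IsTree := by
  constructor
  · haveI : Nonempty {x : W | x ≠ l} := by
      obtain ⟨u, hu⟩ := Fintype.exists_ne_of_one_lt_card (by omega) l
      exact ⟨⟨u, hu⟩⟩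
    constructor
    rintro ⟨a, ha⟩ ⟨b, hb⟩
    obtain ⟨p⟩ := hT.isConnected.preconnected a b
    have hpath : (p.toPath : T.Walk a b).IsPath := p.toPath.2
    have hl : l ∉ (p.toPath : T.Walk a b).support :=
      leaf_not_mem_support hdeg ha hb _ hpath
    exact reachable_induce (p.toPath : T.Walk a b)
      (fun z hz => by
        intro hzl
        exact hl (hzl ▸ hz)) ha hb
  · intro v c hc
    exact hT.IsAcyclic ((c.map (SimpleGraph.Embedding.induce _).toHom))
      (hc.map (SimpleGraph.Embedding.induce (G := T) _).injective)

private lemma card_filter_subtype (l : W) (p : W → Prop) [DecidablePred p] :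
    ((Finset.univ : Finset {x : W | x ≠ l}).filter (fun x => p x.val)).card
      = ((Finset.univ.filter p).erase l).card := by
  apply Finset.card_bij (fun (x : {x : W // x ≠ l}) _ => x.val)
  · rintro ⟨a, ha⟩ hx
    rw [Finset.mem_filter] at hx
    exact Finset.mem_erase.2 ⟨ha, Finset.mem_filter.2 ⟨Finset.mem_univ _, hx.2⟩⟩
  · rintro ⟨a, _⟩ _ ⟨b, _⟩ _ h
    exact Subtype.ext h
  · intro b hb
    rw [Finset.mem_erase, Finset.mem_filter] at hb
    exact ⟨⟨b, hb.1⟩, Finset.mem_filter.2 ⟨Finset.mem_univ _, hb.2.2⟩, rfl⟩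

private lemma unique_nbr {T : SimpleGraph W} [DecidableRel T.Adj] {l : W}
    (hdeg : T.degree l = 1) : ∃ p0, T.Adj l p0 ∧ ∀ z, T.Adj l z → z = p0 := by
  obtain ⟨p0, hp0⟩ := Finset.card_eq_one.1 (by rw [← hdeg]; rfl :
    (T.neighborFinset l).card = 1)
  refine ⟨p0, ?_, ?_⟩
  · have : p0 ∈ T.neighborFinset l := by rw [hp0]; exact Finset.mem_singleton_self _
    exact (T.mem_neighborFinset l p0).1 this
  · intro z hz
    have : z ∈ T.neighborFinset l := (T.mem_neighborFinset l z).2 hz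
    rw [hp0] at this
    exact Finset.mem_singleton.1 this

private lemma tree_two_coloring :
    ∀ (n : ℕ) (W : Type) [Fintype W] [DecidableEq W], Fintype.card W = n →
    ∀ (T : SimpleGraph W) [DecidableRel T.Adj], T.IsTree →
      ∃ cT : W → Bool, ∀ x y, T.Adj x y → cT x ≠ cT y := by
  intro n
  induction n using Nat.strong_induction_on with
  | _ n ih =>
    intro W _ _ hn T _ hT
    by_cases h2 : 2 ≤ Fintype.card W
    · obtain ⟨l, hl⟩ := exists_leaf_s10 T hT h2
      obtain ⟨p0, hlp, huniq⟩ := unique_nbr hl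
      have hp0l : p0 ≠ l := fun h => T.irrefl (h ▸ hlp)
      have hcard' : Fintype.card {x : W | x ≠ l} < n := by
        rw [← hn]
        have : Fintype.card {x : W // x ≠ l} = Fintype.card W - 1 := by
          rw [Fintype.card_subtype_compl (p := fun x => x = l), Fintype.card_subtype_eq]
        calc Fintype.card {x : W | x ≠ l} = Fintype.card W - 1 := this
          _ < Fintype.card W := by omega
      obtain ⟨cT', hcT'⟩ := ih _ hcard' {x : W | x ≠ l} rfl (T.induce {x : W | x ≠ l})
        (isTree_induce_of_leaf hT hl h2)
      refine ⟨fun x => if h : x = l then !(cT' ⟨p0, hp0l⟩) else cT' ⟨x, h⟩, ?_⟩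
      intro x y hxy
      by_cases hx : x = l
      · subst hx
        have hy : y = p0 := huniq y hxy
        subst hy
        dsimp only
        rw [dif_pos rfl, dif_neg hp0l]
        simp
      · by_cases hy : y = l
        · subst hy
          have hx' : x = p0 := huniq x hxy.symm
          subst hx'
          dsimp only
          rw [dif_pos rfl, dif_neg hp0l]
          simp [eq_comm]
        · dsimp only
          rw [dif_neg hx, dif_neg hy]
          exact hcT' ⟨x, hx⟩ ⟨y, hy⟩ hxy
    · refine ⟨fun _ => true, fun x y hxy => ?_⟩
      haveI : Subsingleton W := by
        rw [← Fintype.card_le_one_iff_subsingleton]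
        omega
      exact absurd (Subsingleton.elim x y) (T.ne_of_adj hxy)

end TreeLemmas

private lemma embed_tree (G : SimpleGraph V) [DecidableRel G.Adj] (c : V → Bool)
    (hc : ∀ v w, G.Adj v w → c v ≠ c w) (S : Finset V) (hS : S.Nonempty) :
    ∀ (n : ℕ) (W : Type) [Fintype W] [DecidableEq W], Fintype.card W = n →
    ∀ (T : SimpleGraph W) [DecidableRel T.Adj], T.IsTree →
    ∀ (cT : W → Bool), (∀ x y, T.Adj x y → cT x ≠ cT y) →
    (∀ v ∈ S, (if c v
        then (Finset.univ.filter fun x => cT x = false).card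
        else (Finset.univ.filter fun x => cT x = true).card) ≤ degIn G S v) →
    ∃ f : W → V, Function.Injective f ∧ (∀ x, f x ∈ S) ∧ (∀ x, c (f x) = cT x) ∧
      (∀ x y, T.Adj x y → G.Adj (f x) (f y)) := by
  intro n
  induction n using Nat.strong_induction_on with
  | _ n ih =>
    intro W _ _ hn T _ hT cT hcT hdeg
    by_cases h2 : 2 ≤ Fintype.card W
    · -- inductive step: remove a leaf
      obtain ⟨l, hl⟩ := exists_leaf_s10 T hT h2
      obtain ⟨p0, hlp, huniq⟩ := unique_nbr hl
      have hp0l : p0 ≠ l := fun h => T.irrefl (h ▸ hlp)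
      have hcard' : Fintype.card {x : W | x ≠ l} < n := by
        rw [← hn]
        have : Fintype.card {x : W // x ≠ l} = Fintype.card W - 1 := by
          rw [Fintype.card_subtype_compl (p := fun x => x = l), Fintype.card_subtype_eq]
        calc Fintype.card {x : W | x ≠ l} = Fintype.card W - 1 := this
          _ < Fintype.card W := by omega
      -- the smaller tree
      have hT' : (T.induce {x : W | x ≠ l}).IsTree := isTree_induce_of_leaf hT hl h2
      have hcT' : ∀ x y : {x : W | x ≠ l}, (T.induce {x : W | x ≠ l}).Adj x y →
          cT x.val ≠ cT y.val := fun x y hxy => hcT _ _ hxy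
      -- color class sizes only shrink
      have hclass : ∀ b : Bool,
          ((Finset.univ : Finset {x : W | x ≠ l}).filter (fun x => cT x.val = b)).card
            ≤ (Finset.univ.filter fun x : W => cT x = b).card := by
        intro b
        rw [card_filter_subtype l (fun y => cT y = b)]
        exact Finset.card_erase_le
      have hdeg' : ∀ v ∈ S, (if c v
          then ((Finset.univ : Finset {x : W | x ≠ l}).filter
            (fun x => cT x.val = false)).card
          else ((Finset.univ : Finset {x : W | x ≠ l}).filter
            (fun x => cT x.val = true)).card) ≤ degIn G S v := by
        intro v hv
        refine le_trans ?_ (hdeg v hv)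
        cases hcv : c v
        · simp only [Bool.false_eq_true, if_false]
          exact hclass true
        · rw [if_pos rfl, if_pos rfl]
          exact hclass false
      obtain ⟨f', hinj', hmem', hcol', hadj'⟩ := ih _ hcard' {x : W | x ≠ l} rfl
        (T.induce {x : W | x ≠ l}) hT' (fun x => cT x.val) hcT' hdeg'
      set vp := f' ⟨p0, hp0l⟩ with hvp
      have hvpS : vp ∈ S := hmem' _
      have hvpcol : c vp = cT p0 := hcol' _
      have hlp0col : cT l ≠ cT p0 := hcT l p0 hlp
      -- the used vertices of the leaf's colour class
      set B := ((Finset.univ : Finset {x : W | x ≠ l}).filter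
        (fun x => cT x.val = cT l)).image f' with hB
      have hBcard : B.card + 1 ≤ (Finset.univ.filter fun x : W => cT x = cT l).card := by
        have h1 : B.card ≤ ((Finset.univ.filter fun x : W => cT x = cT l).erase l).card :=
          le_trans Finset.card_image_le (le_of_eq (card_filter_subtype l (fun y => cT y = cT l)))
        have hlmem : l ∈ Finset.univ.filter fun x : W => cT x = cT l :=
          Finset.mem_filter.2 ⟨Finset.mem_univ _, rfl⟩
        have h2' := Finset.card_erase_of_mem hlmem
        have h3 := Finset.card_pos.2 ⟨l, hlmem⟩
        omega
      have hdvp : (Finset.univ.filter fun x : W => cT x = cT l).card ≤ degIn G S vp := by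
        refine le_trans (le_of_eq ?_) (hdeg vp hvpS)
        cases hcl : cT l
        · -- cT l = false, so cT p0 = true = c vp
          have hp0t : cT p0 = true := by
            cases h : cT p0
            · rw [hcl, h] at hlp0col; exact absurd rfl hlp0col
            · rfl
          rw [if_pos (by rw [hvpcol, hp0t])]
        · have hp0f : cT p0 = false := by
            cases h : cT p0
            · rfl
            · rw [hcl, h] at hlp0col; exact absurd rfl hlp0col
          rw [if_neg (by rw [hvpcol, hp0f]; exact Bool.false_ne_true)]
      -- find a fresh neighbour of vp
      have : ∃ w₀ ∈ S.filter (G.Adj vp), w₀ ∉ B := by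
        by_contra h
        push_neg at h
        have hsub : S.filter (G.Adj vp) ⊆ B := h
        have := Finset.card_le_card hsub
        unfold degIn at hdvp
        omega
      obtain ⟨w₀, hw₀, hw₀B⟩ := this
      obtain ⟨hw₀S, hw₀adj⟩ := Finset.mem_filter.1 hw₀
      have hw₀col : c w₀ = cT l := by
        have h1 : c vp ≠ c w₀ := hc vp w₀ hw₀adj
        have hh2 : c w₀ ≠ cT p0 := fun h => h1 (by rw [hvpcol, h])
        have hh3 := hlp0col
        revert hh2 hh3
        cases h : c w₀ <;> cases h' : cT p0 <;> cases h'' : cT l <;> decide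
      refine ⟨fun x => if h : x = l then w₀ else f' ⟨x, h⟩, ?_, ?_, ?_, ?_⟩
      · -- injective
        intro x y hxy
        dsimp only at hxy
        by_cases hx : x = l <;> by_cases hy : y = l
        · rw [hx, hy]
        · exfalso
          rw [dif_pos hx, dif_neg hy] at hxy
          by_cases hcy : cT y = cT l
          · exact hw₀B (hxy ▸ Finset.mem_image.2
              ⟨⟨y, hy⟩, Finset.mem_filter.2 ⟨Finset.mem_univ _, hcy⟩, rfl⟩)
          · have := hcol' ⟨y, hy⟩
            rw [← hxy, hw₀col] at this
            exact hcy this.symm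
        · exfalso
          rw [dif_neg hx, dif_pos hy] at hxy
          by_cases hcx : cT x = cT l
          · exact hw₀B (hxy ▸ Finset.mem_image.2
              ⟨⟨x, hx⟩, Finset.mem_filter.2 ⟨Finset.mem_univ _, hcx⟩, rfl⟩)
          · have := hcol' ⟨x, hx⟩
            rw [hxy, hw₀col] at this
            exact hcx this.symm
        · rw [dif_neg hx, dif_neg hy] at hxy
          have := hinj' hxy
          exact congrArg Subtype.val (by exact this)
      · intro x
        dsimp only
        by_cases hx : x = l
        · rw [dif_pos hx]; exact hw₀S
        · rw [dif_neg hx]; exact hmem' _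
      · intro x
        dsimp only
        by_cases hx : x = l
        · rw [dif_pos hx, hx]; exact hw₀col
        · rw [dif_neg hx]; exact hcol' _
      · intro x y hxy
        dsimp only
        by_cases hx : x = l
        · have hy : y = p0 := huniq y (by rw [← hx]; exact hxy)
          have hyl : y ≠ l := by rw [hy]; exact hp0l
          rw [dif_pos hx, dif_neg hyl]
          have hfy : f' ⟨y, hyl⟩ = vp := by
            rw [hvp]; congr 1; exact Subtype.ext hy
          rw [hfy]
          exact hw₀adj.symm
        · by_cases hy : y = l
          · subst hy
            have hx' : x = p0 := huniq x hxy.symm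
            rw [dif_pos rfl, dif_neg hx]
            have : f' ⟨x, hx⟩ = vp := by
              rw [hvp]; congr 1; exact Subtype.ext hx'
            rw [this]
            exact hw₀adj
          · rw [dif_neg hx, dif_neg hy]
            exact hadj' ⟨x, hx⟩ ⟨y, hy⟩ hxy
    · -- base case: at most one vertex
      have hne : Nonempty W := hT.isConnected.nonempty
      have hcard1 : Fintype.card W = 1 := by
        have := Fintype.card_pos_iff.2 hne
        omega
      haveI : Subsingleton W := by
        rw [← Fintype.card_le_one_iff_subsingleton]
        omega
      obtain ⟨u₀⟩ := hne
      obtain ⟨v, hv⟩ := hS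
      by_cases hcv : c v = cT u₀
      · refine ⟨fun _ => v, fun _ _ _ => Subsingleton.elim _ _, fun _ => hv, ?_, ?_⟩
        · intro x; rw [Subsingleton.elim x u₀]; exact hcv
        · intro x y hxy
          exact absurd (Subsingleton.elim x y) (T.ne_of_adj hxy)
      · have hone : 1 ≤ (if c v
            then (Finset.univ.filter fun x => cT x = false).card
            else (Finset.univ.filter fun x => cT x = true).card) := by
          have hu₀ : ∀ b : Bool, cT u₀ = b →
              1 ≤ (Finset.univ.filter fun x => cT x = b).card := by
            intro b hb
            exact Finset.card_pos.2 ⟨u₀, Finset.mem_filter.2 ⟨Finset.mem_univ _, hb⟩⟩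
          cases h : c v
          · rw [if_neg (by decide : ¬(false = true))]
            apply hu₀
            cases h' : cT u₀
            · rw [h, h'] at hcv; exact absurd rfl hcv
            · rfl
          · rw [if_pos rfl]
            apply hu₀
            cases h' : cT u₀
            · rfl
            · rw [h, h'] at hcv; exact absurd rfl hcv
        have hpos : 0 < degIn G S v := lt_of_lt_of_le hone (hdeg v hv)
        obtain ⟨w, hw⟩ := Finset.card_pos.1 hpos
        obtain ⟨hwS, hwadj⟩ := Finset.mem_filter.1 hw
        have hwcol : c w = cT u₀ := by
          have h1 : c v ≠ c w := hc v w hwadj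
          have h2 := hcv
          revert h1 h2
          cases h : c v <;> cases h' : c w <;> cases h'' : cT u₀ <;> decide
        refine ⟨fun _ => w, fun _ _ _ => Subsingleton.elim _ _, fun _ => hwS, ?_, ?_⟩
        · intro x; rw [Subsingleton.elim x u₀]; exact hwcol
        · intro x y hxy
          exact absurd (Subsingleton.elim x y) (T.ne_of_adj hxy)

private lemma degIn_univ (G : SimpleGraph V) [DecidableRel G.Adj] (v : V) :
    degIn G Finset.univ v = G.degree v := by
  unfold degIn
  congr 1
  ext w
  simp [SimpleGraph.mem_neighborFinset]

/-- **Main theorem for `r = 2`.** Let `G` be a bipartite graph with `m` edges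
whose set of non-isolated vertices has size `s`. If `m > ((t-1)/2)·s`, then
`G` contains every tree with `t` edges. -/
theorem bipartite_erdos_sos {V : Type} [Fintype V] [DecidableEq V] (t m s : ℕ)
    (G : SimpleGraph V) [DecidableRel G.Adj]
    (hbip : ∃ c : V → Bool, ∀ v w, G.Adj v w → c v ≠ c w)
    (hm : G.edgeFinset.card = m)
    (hs : (Finset.univ.filter fun v => 0 < G.degree v).card = s)
    (hms : ((t : ℝ) - 1) / 2 * s < m) :
    ∀ (W : Type) [Fintype W] [DecidableEq W] (T : SimpleGraph W)
      [DecidableRel T.Adj], T.IsTree → T.edgeFinset.card = t →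
      ∃ f : W ↪ V, ∀ a b, T.Adj a b → G.Adj (f a) (f b) := by
  intro W _ _ T _ hT ht
  obtain ⟨c, hc⟩ := hbip
  haveI hWne : Nonempty W := hT.isConnected.nonempty
  have hsum2m : ∑ v : V, G.degree v = 2 * m := by
    rw [G.sum_degrees_eq_twice_card_edges, hm]
  have hcardW : Fintype.card W = t + 1 := by
    have h1 := hT.card_edgeFinset
    omega
  by_cases hW1 : Fintype.card W = 1
  · -- single-vertex tree
    haveI : Subsingleton W := by
      rw [← Fintype.card_le_one_iff_subsingleton]; omega
    have hV : ∃ v : V, True := by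
      by_contra h
      push_neg at h
      have hz : ∀ v : V, G.degree v = 0 := fun v => (h v).elim
      have hm0 : m = 0 := by
        have : ∑ v : V, G.degree v = 0 := Finset.sum_eq_zero fun v _ => hz v
        omega
      have hs0 : s = 0 := by
        rw [← hs]
        rw [Finset.card_eq_zero, Finset.filter_eq_empty_iff]
        intro v _
        exact (h v).elim
      rw [hm0, hs0] at hms
      norm_num at hms
    obtain ⟨v, -⟩ := hV
    refine ⟨⟨fun _ => v, fun a b _ => Subsingleton.elim a b⟩, ?_⟩
    intro a b hab
    exact absurd (Subsingleton.elim a b) (T.ne_of_adj hab)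
  · -- the real case
    have h2 : 2 ≤ Fintype.card W := by
      have := Fintype.card_pos_iff.2 hWne
      omega
    have ht1 : 1 ≤ t := by omega
    obtain ⟨cT, hcT⟩ := tree_two_coloring (Fintype.card W) W rfl T hT
    set aT := (Finset.univ.filter fun x => cT x = true).card with haTdef
    set bT := (Finset.univ.filter fun x => cT x = false).card with hbTdef
    have habT : aT + bT = t + 1 := by
      have h := Finset.card_filter_add_card_filter_not
        (s := (Finset.univ : Finset W)) (p := fun x => cT x = true)
      simp only [Bool.not_eq_true] at h
      rw [Finset.card_univ, hcardW] at h
      exact h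
    -- both classes are nonempty
    have hedge : ∃ x y : W, T.Adj x y := by
      have : 0 < T.edgeFinset.card := by omega
      obtain ⟨e, he⟩ := Finset.card_pos.1 this
      induction e using Sym2.ind with
      | _ x y =>
        rw [SimpleGraph.mem_edgeFinset, SimpleGraph.mem_edgeSet] at he
        exact ⟨x, y, he⟩
    have haT : 1 ≤ aT ∧ 1 ≤ bT := by
      obtain ⟨x, y, hxy⟩ := hedge
      have hne := hcT x y hxy
      constructor
      · cases hx : cT x
        · have hy : cT y = true := by
            cases hy : cT y
            · rw [hx, hy] at hne; exact absurd rfl hne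
            · rfl
          exact Finset.card_pos.2 ⟨y, Finset.mem_filter.2 ⟨Finset.mem_univ _, hy⟩⟩
        · exact Finset.card_pos.2 ⟨x, Finset.mem_filter.2 ⟨Finset.mem_univ _, hx⟩⟩
      · cases hx : cT x
        · exact Finset.card_pos.2 ⟨x, Finset.mem_filter.2 ⟨Finset.mem_univ _, hx⟩⟩
        · have hy : cT y = false := by
            cases hy : cT y
            · rfl
            · rw [hx, hy] at hne; exact absurd rfl hne
          exact Finset.card_pos.2 ⟨y, Finset.mem_filter.2 ⟨Finset.mem_univ _, hy⟩⟩
    have hineq : (t - 1) * s < 2 * m := by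
      have h1 : ((t : ℝ) - 1) * s < 2 * m := by linarith
      have h2' : (((t - 1) * s : ℕ) : ℝ) < ((2 * m : ℕ) : ℝ) := by
        push_cast [Nat.cast_sub ht1]
        linarith
      exact_mod_cast h2'
    set P := Finset.univ.filter (fun v => 0 < degIn G Finset.univ v) with hPdef
    have hPs : P.card = s := by
      rw [hPdef, ← hs]
      congr 1
      apply Finset.filter_congr
      intro v _
      rw [degIn_univ]
    have hsplit : (∑ v ∈ P, 2 * (if c v then bT - 1 else aT - 1))
        + (∑ v ∈ P, 2 * (if !(c v) then bT - 1 else aT - 1)) = 2 * ((t - 1) * s) := by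
      rw [← Finset.sum_add_distrib]
      have hpt : ∀ v ∈ P, 2 * (if c v then bT - 1 else aT - 1)
          + 2 * (if !(c v) then bT - 1 else aT - 1) = 2 * (t - 1) := by
        intro v _
        cases h : c v <;> simp <;> omega
      rw [Finset.sum_congr rfl hpt, Finset.sum_const, hPs, smul_eq_mul]
      ring
    have hsumdeg : ∑ v : V, degIn G Finset.univ v = 2 * m := by
      rw [Finset.sum_congr rfl (fun v _ => degIn_univ G v), hsum2m]
    have hchoice : ∃ c'' : V → Bool, (∀ v w, G.Adj v w → c'' v ≠ c'' w) ∧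
        (∑ v ∈ P, 2 * (if c'' v then bT - 1 else aT - 1)) < 2 * m := by
      by_cases h : (∑ v ∈ P, 2 * (if c v then bT - 1 else aT - 1)) < 2 * m
      · exact ⟨c, hc, h⟩
      · have h2'' : (∑ v ∈ P, 2 * (if !(c v) then bT - 1 else aT - 1)) < 2 * m := by
          omega
        exact ⟨fun v => !(c v), fun v w hvw h' => hc v w hvw (Bool.not_inj h'), h2''⟩
    obtain ⟨c'', hc'', hcw⟩ := hchoice
    obtain ⟨S', hS'sub, hS'ne, hgood⟩ := coreA G (Finset.univ : Finset V).card
      Finset.univ rfl (fun v => if c'' v then bT - 1 else aT - 1) (by rw [hsumdeg]; exact hcw)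
    have hdeg'' : ∀ v ∈ S', (if c'' v
        then (Finset.univ.filter fun x => cT x = false).card
        else (Finset.univ.filter fun x => cT x = true).card) ≤ degIn G S' v := by
      intro v hv
      have := hgood v hv
      rw [← hbTdef, ← haTdef]
      cases h : c'' v
      · rw [if_neg (by decide : ¬(false = true))]
        rw [h, if_neg (by decide : ¬(false = true))] at this
        omega
      · rw [if_pos rfl]
        rw [h, if_pos rfl] at this
        omega
    obtain ⟨f, hinj, _, _, hadj⟩ := embed_tree G c'' hc'' S' hS'ne
      (Fintype.card W) W rfl T hT cT hcT hdeg''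
    exact ⟨⟨f, hinj⟩, hadj⟩
end
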